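/- arXiv:2010.13815 — 2 statements merged into one kernel-verified Lean document; each statement's English description precedes it below -/
import Mathlib

section
/- (Hironaka's formal division algorithm.) Let A be an integral domain with field of fractions 𝕂, let L be a positive linear form on ℝⁿ, and order ℕⁿ×{1,…,p} by comparing (L(α), j, α) lexicographically. Let Φ₁,…,Φ_q ∈ A⟦x₁,…,xₙ⟧ᵖ be nonzero, set (α_i,j_i) := exp Φ_i, and define the partition {Δ₁,…,Δ_q,Δ} of ℕⁿ×{1,…,p} by Δ₁ := (α₁,j₁)+ℕⁿ, Δ_i := ((α_i,j_i)+ℕⁿ) ∖ (Δ₁∪⋯∪Δ_{i−1}) for i = 2,…,q, and Δ := ℕⁿ×{1,…,p} ∖ (Δ₁∪⋯∪Δ_q). Let S be the multiplicative subset of A generated by the initial coefficients Φ_{i,(α_i,j_i)}, and let B be any subring of 𝕂 containing the localization S⁻¹A. Then for every F ∈ B⟦x⟧ᵖ there exist unique Q₁,…,Q_q ∈ B⟦x⟧ and R ∈ B⟦x⟧ᵖ such that F = Σ_{i=1}^q Q_iΦ_i + R, with (α_i,j_i)+supp Q_i ⊆ Δ_i for each i and supp R ⊆ Δ; moreover (α_i,j_i)+exp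 Q_i ≥ exp F for each i with Q_i ≠ 0, and exp R ≥ exp F if R ≠ 0. -/
open Classical

/-- Index set `ℕⁿ × {1,…,p}` for coefficients of elements of `A⟦x₁,…,xₙ⟧ᵖ`. -/
abbrev Idx (n p : ℕ) := (Fin n →₀ ℕ) × Fin p

/-- Value `L(α) = Σ λ_i α_i` of a linear form on a multiindex. -/
noncomputable def Lval {n : ℕ} (L : Fin n → ℝ) (α : Fin n →₀ ℕ) : ℝ := ∑ i, L i * (α i : ℝ)

/-- Lexicographic order on multiindices. -/
def lexLT {n : ℕ} (α β : Fin n →₀ ℕ) : Prop :=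
  ∃ i : Fin n, (∀ j, j < i → α j = β j) ∧ α i < β i

/-- The total order on `ℕⁿ × {1,…,p}` comparing `(L(α), j, α)` lexicographically. -/
noncomputable def idxLT {n p : ℕ} (L : Fin n → ℝ) (a b : Idx n p) : Prop :=
  Lval L a.1 < Lval L b.1 ∨
    (Lval L a.1 = Lval L b.1 ∧ ((a.2 : ℕ) < (b.2 : ℕ) ∨ (a.2 = b.2 ∧ lexLT a.1 b.1)))

noncomputable def idxLE {n p : ℕ} (L : Fin n → ℝ) (a b : Idx n p) : Prop :=
  idxLT L a b ∨ a = b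

/-- Support of `F ∈ A⟦x⟧ᵖ`. -/
def suppV {n p : ℕ} {A : Type} [Semiring A] (F : Fin p → MvPowerSeries (Fin n) A) :
    Set (Idx n p) :=
  {d | MvPowerSeries.coeff d.1 (F d.2) ≠ 0}

/-- `d` is the initial exponent `exp F` of `F` w.r.t. the order given by `L`. -/
noncomputable def IsExpOf {n p : ℕ} {A : Type} [Semiring A] (L : Fin n → ℝ)
    (F : Fin p → MvPowerSeries (Fin n) A) (d : Idx n p) : Prop :=
  d ∈ suppV F ∧ ∀ d' ∈ suppV F, idxLE L d d'

/-- `(α_i, j_i) + ℕⁿ`. -/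
def DeltaFull {n p q : ℕ} (e : Fin q → Idx n p) (i : Fin q) : Set (Idx n p) :=
  {d | d.2 = (e i).2 ∧ ∃ β : Fin n →₀ ℕ, d.1 = (e i).1 + β}

/-- The sets `Δ_i` of Hironaka's division: `Δ_i = ((α_i,j_i) + ℕⁿ) ∖ (Δ_1 ∪ ⋯ ∪ Δ_{i−1})`. -/
def Delta {n p q : ℕ} (e : Fin q → Idx n p) (i : Fin q) : Set (Idx n p) :=
  DeltaFull e i \ ⋃ (k : Fin q) (hk : k < i), Delta e k
termination_by i.val
decreasing_by exact hk

/-- The complementary region `Δ = ℕⁿ×{1,…,p} ∖ (Δ_1 ∪ ⋯ ∪ Δ_q)`. -/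
def DeltaC {n p q : ℕ} (e : Fin q → Idx n p) : Set (Idx n p) :=
  (⋃ i : Fin q, Delta e i)ᶜ


section Lemmas

variable {n p q : ℕ}

theorem lexLT_irrefl {α : Fin n →₀ ℕ} : ¬ lexLT α α := by
  rintro ⟨i, -, h⟩; exact lt_irrefl _ h

theorem lexLT_trans {α β γ : Fin n →₀ ℕ} (h1 : lexLT α β) (h2 : lexLT β γ) : lexLT α γ := by
  obtain ⟨i, hi, hlt⟩ := h1
  obtain ⟨i', hi', hlt'⟩ := h2
  rcases lt_trichotomy i i' with h | h | h
  · exact ⟨i, fun j hj => (hi j hj).trans (hi' j (hj.trans h)), hlt.trans_le (hi' i h).le⟩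
  · subst h; exact ⟨i, fun j hj => (hi j hj).trans (hi' j hj), hlt.trans hlt'⟩
  · exact ⟨i', fun j hj => (hi j (hj.trans h)).trans (hi' j hj), (hi i' h).le.trans_lt hlt'⟩

theorem lexLT_total {α β : Fin n →₀ ℕ} (h : α ≠ β) : lexLT α β ∨ lexLT β α := by
  have hs : (Finset.univ.filter fun i => α i ≠ β i).Nonempty := by
    by_contra hc
    rw [Finset.not_nonempty_iff_eq_empty, Finset.filter_eq_empty_iff] at hc
    exact h (Finsupp.ext fun i => by simpa using hc (Finset.mem_univ i))
  set i := (Finset.univ.filter fun i => α i ≠ β i).min' hs with hidef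
  have hmem := Finset.min'_mem _ hs
  have hne : α i ≠ β i := by simpa using hmem
  have heq : ∀ j, j < i → α j = β j := fun j hj => by
    by_contra hc
    exact absurd (Finset.min'_le _ j (by simp [hc])) (not_le.mpr hj)
  rcases hne.lt_or_gt with h' | h'
  · exact Or.inl ⟨i, heq, h'⟩
  · exact Or.inr ⟨i, fun j hj => (heq j hj).symm, h'⟩

theorem lexLT_add {α β : Fin n →₀ ℕ} (h : lexLT α β) (γ : Fin n →₀ ℕ) :
    lexLT (α + γ) (β + γ) := by
  obtain ⟨i, hi, hlt⟩ := h
  exact ⟨i, fun j hj => by simp [Finsupp.add_apply, hi j hj],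
    by simpa [Finsupp.add_apply] using Nat.add_lt_add_right hlt (γ i)⟩

theorem Lval_add (L : Fin n → ℝ) (α β : Fin n →₀ ℕ) :
    Lval L (α + β) = Lval L α + Lval L β := by
  unfold Lval
  rw [← Finset.sum_add_distrib]
  refine Finset.sum_congr rfl fun i _ => ?_
  rw [Finsupp.add_apply]
  push_cast
  ring

theorem idxLT_irrefl {L : Fin n → ℝ} {a : Idx n p} : ¬ idxLT L a a := by
  rintro (h | ⟨-, h | ⟨-, h⟩⟩)
  · exact lt_irrefl _ h
  · exact lt_irrefl _ h
  · exact lexLT_irrefl h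

theorem idxLT_trans {L : Fin n → ℝ} {a b c : Idx n p}
    (h1 : idxLT L a b) (h2 : idxLT L b c) : idxLT L a c := by
  rcases h1 with h1 | ⟨e1, h1⟩ <;> rcases h2 with h2 | ⟨e2, h2⟩
  · exact Or.inl (h1.trans h2)
  · exact Or.inl (h1.trans_eq e2)
  · exact Or.inl (e1.trans_lt h2)
  · refine Or.inr ⟨e1.trans e2, ?_⟩
    rcases h1 with h1 | ⟨j1, h1⟩ <;> rcases h2 with h2 | ⟨j2, h2⟩
    · exact Or.inl (h1.trans h2)
    · exact Or.inl (by rw [← j2]; exact h1)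
    · exact Or.inl (by rw [j1]; exact h2)
    · exact Or.inr ⟨j1.trans j2, lexLT_trans h1 h2⟩

theorem idxLT_asymm {L : Fin n → ℝ} {a b : Idx n p}
    (h1 : idxLT L a b) (h2 : idxLT L b a) : False :=
  idxLT_irrefl (idxLT_trans h1 h2)

theorem idxLT_trichot (L : Fin n → ℝ) (a b : Idx n p) :
    idxLT L a b ∨ a = b ∨ idxLT L b a := by
  rcases lt_trichotomy (Lval L a.1) (Lval L b.1) with h | h | h
  · exact Or.inl (Or.inl h)
  · rcases lt_trichotomy ((a.2 : ℕ)) ((b.2 : ℕ)) with hj | hj | hj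
    · exact Or.inl (Or.inr ⟨h, Or.inl hj⟩)
    · have hj2 : a.2 = b.2 := Fin.ext hj
      by_cases hab : a.1 = b.1
      · exact Or.inr (Or.inl (Prod.ext hab hj2))
      · rcases lexLT_total hab with h' | h'
        · exact Or.inl (Or.inr ⟨h, Or.inr ⟨hj2, h'⟩⟩)
        · exact Or.inr (Or.inr (Or.inr ⟨h.symm, Or.inr ⟨hj2.symm, h'⟩⟩))
    · exact Or.inr (Or.inr (Or.inr ⟨h.symm, Or.inl hj⟩))
  · exact Or.inr (Or.inr (Or.inl h))

theorem idxLT_add {L : Fin n → ℝ} {a b : Idx n p} (h : idxLT L a b) (β : Fin n →₀ ℕ) :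
    idxLT L (a.1 + β, a.2) (b.1 + β, b.2) := by
  rcases h with h | ⟨he, h | ⟨hj, hl⟩⟩
  · exact Or.inl (by simpa [Lval_add] using add_lt_add_right h (Lval L β))
  · exact Or.inr ⟨by simp [Lval_add, he], Or.inl h⟩
  · exact Or.inr ⟨by simp [Lval_add, he], Or.inr ⟨hj, lexLT_add hl β⟩⟩

theorem idxLE_add {L : Fin n → ℝ} {a b : Idx n p} (h : idxLE L a b) (β : Fin n →₀ ℕ) :
    idxLE L (a.1 + β, a.2) (b.1 + β, b.2) := by
  rcases h with h | h
  · exact Or.inl (idxLT_add h β)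
  · subst h; exact Or.inr rfl

end Lemmas

section WF

variable {n p q : ℕ}

theorem Lval_le_of_idxLT {L : Fin n → ℝ} {a b : Idx n p} (h : idxLT L a b) :
    Lval L a.1 ≤ Lval L b.1 := by
  rcases h with h | ⟨h, -⟩
  · exact h.le
  · exact h.le

theorem finite_Lval_le {L : Fin n → ℝ} (hL : ∀ i, 0 < L i) (C : ℝ) :
    {α : Fin n →₀ ℕ | Lval L α ≤ C}.Finite := by
  have hsub : {α : Fin n →₀ ℕ | Lval L α ≤ C} ⊆
      (fun (α : Fin n →₀ ℕ) => (α : Fin n → ℕ)) ⁻¹'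
        (Set.univ.pi fun i => Set.Iic (Nat.ceil (C / L i))) := by
    intro α hα
    simp only [Set.mem_preimage, Set.mem_pi, Set.mem_univ, Set.mem_Iic, forall_true_left]
    intro i
    have h1 : L i * (α i : ℝ) ≤ Lval L α := by
      refine Finset.single_le_sum (f := fun i => L i * (α i : ℝ)) ?_ (Finset.mem_univ i)
      intro j _
      exact mul_nonneg (hL j).le (Nat.cast_nonneg _)
    have h2 : (α i : ℝ) ≤ C / L i := by
      rw [le_div_iff₀ (hL i)]
      rw [mul_comm]
      exact h1.trans hα
    have h3 : (α i : ℝ) ≤ (Nat.ceil (C / L i) : ℝ) := h2.trans (Nat.le_ceil _)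
    exact_mod_cast h3
  refine Set.Finite.subset ?_ hsub
  exact Set.Finite.preimage (Function.Injective.injOn DFunLike.coe_injective)
    (Set.Finite.pi fun i => Set.finite_Iic _)

theorem finite_idxLT {L : Fin n → ℝ} (hL : ∀ i, 0 < L i) (d : Idx n p) :
    {d' : Idx n p | idxLT L d' d}.Finite := by
  refine Set.Finite.subset
    (Set.Finite.prod (finite_Lval_le hL (Lval L d.1)) (Set.finite_univ : (Set.univ : Set (Fin p)).Finite)) ?_
  intro a ha
  exact ⟨Lval_le_of_idxLT ha, trivial⟩

theorem wf_of_finite_preds {α : Type*} (r : α → α → Prop)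
    (htrans : ∀ {a b c}, r a b → r b c → r a c) (hirr : ∀ a, ¬ r a a)
    (hfin : ∀ b, {a | r a b}.Finite) : WellFounded r := by
  have H : ∀ m : ℕ, ∀ b : α, (hfin b).toFinset.card ≤ m → Acc r b := by
    intro m
    induction m with
    | zero =>
      intro b hb
      refine Acc.intro b fun a ha => ?_
      exfalso
      have hmem : a ∈ (hfin b).toFinset := (hfin b).mem_toFinset.mpr ha
      rw [Finset.card_eq_zero.mp (Nat.le_zero.mp hb)] at hmem
      exact Finset.notMem_empty a hmem
    | succ m ih =>
      intro b hb
      refine Acc.intro b fun a ha => ih a ?_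
      have hsub : (hfin a).toFinset ⊆ (hfin b).toFinset.erase a := by
        intro x hx
        rw [(hfin a).mem_toFinset] at hx
        refine Finset.mem_erase.mpr ⟨?_, (hfin b).mem_toFinset.mpr (htrans hx ha)⟩
        rintro rfl; exact hirr x hx
      have hmem2 : a ∈ (hfin b).toFinset := (hfin b).mem_toFinset.mpr ha
      have := Finset.card_le_card hsub
      rw [Finset.card_erase_of_mem hmem2] at this
      omega
  exact ⟨fun b => H _ b le_rfl⟩

theorem idxLT_wf (L : Fin n → ℝ) (hL : ∀ i, 0 < L i) :
    WellFounded (idxLT (p := p) L) :=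
  wf_of_finite_preds _ (fun h1 h2 => idxLT_trans h1 h2) (fun _ => idxLT_irrefl)
    (finite_idxLT hL)

end WF

section DeltaLemmas

variable {n p q : ℕ}

theorem mem_delta_iff {e : Fin q → Idx n p} {d : Idx n p} {i : Fin q} :
    d ∈ Delta e i ↔ d ∈ DeltaFull e i ∧ ∀ k, k < i → d ∉ Delta e k := by
  rw [Delta]
  simp only [Set.mem_diff, Set.mem_iUnion, not_exists]

theorem delta_disjoint {e : Fin q → Idx n p} {d : Idx n p} {i k : Fin q}
    (hik : i ≠ k) (hi : d ∈ Delta e i) (hk : d ∈ Delta e k) : False := by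
  rcases hik.lt_or_gt with h | h
  · exact (mem_delta_iff.mp hk).2 i h hi
  · exact (mem_delta_iff.mp hi).2 k h hk

theorem exists_delta_of_full {e : Fin q → Idx n p} {d : Idx n p} {i : Fin q}
    (h : d ∈ DeltaFull e i) : ∃ k, d ∈ Delta e k := by
  by_contra hc
  push_neg at hc
  exact hc i (mem_delta_iff.mpr ⟨h, fun k _ => hc k⟩)

end DeltaLemmas

section Division

variable {n p q : ℕ} {K : Type} [Field K]

/-- The recursively defined coefficient function of Hironaka division. -/
noncomputable def divC (L : Fin n → ℝ) (hL : ∀ i, 0 < L i)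
    (Ψ : Fin q → Fin p → MvPowerSeries (Fin n) K) (e : Fin q → Idx n p)
    (F : Fin p → MvPowerSeries (Fin n) K) : Idx n p → K :=
  (idxLT_wf L hL).fix fun d rec =>
    (fun S =>
      if h : ∃ i, d ∈ Delta e i then
        (MvPowerSeries.coeff d.1 (F d.2) - S) *
          (MvPowerSeries.coeff (e (Classical.choose h)).1
            (Ψ (Classical.choose h) (e (Classical.choose h)).2))⁻¹
      else MvPowerSeries.coeff d.1 (F d.2) - S)
    (∑ i : Fin q, ∑ bg ∈ Finset.HasAntidiagonal.antidiagonal d.1,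
      if h : ((e i).1 + bg.1, (e i).2) ∈ Delta e i ∧ idxLT L ((e i).1 + bg.1, (e i).2) d
      then rec ((e i).1 + bg.1, (e i).2) h.2 * MvPowerSeries.coeff bg.2 (Ψ i d.2)
      else 0)

/-- The part of the coefficient of `∑ Qᵢ Ψᵢ` at `d` coming from strictly smaller indices. -/
noncomputable def lowSum (L : Fin n → ℝ) (hL : ∀ i, 0 < L i)
    (Ψ : Fin q → Fin p → MvPowerSeries (Fin n) K) (e : Fin q → Idx n p)
    (F : Fin p → MvPowerSeries (Fin n) K) (d : Idx n p) : K :=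
  ∑ i : Fin q, ∑ bg ∈ Finset.HasAntidiagonal.antidiagonal d.1,
    if h : ((e i).1 + bg.1, (e i).2) ∈ Delta e i ∧ idxLT L ((e i).1 + bg.1, (e i).2) d
    then divC L hL Ψ e F ((e i).1 + bg.1, (e i).2) * MvPowerSeries.coeff bg.2 (Ψ i d.2)
    else 0

theorem divC_eq (L : Fin n → ℝ) (hL : ∀ i, 0 < L i)
    (Ψ : Fin q → Fin p → MvPowerSeries (Fin n) K) (e : Fin q → Idx n p)
    (F : Fin p → MvPowerSeries (Fin n) K) (d : Idx n p) :
    divC L hL Ψ e F d =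
      if h : ∃ i, d ∈ Delta e i then
        (MvPowerSeries.coeff d.1 (F d.2) - lowSum L hL Ψ e F d) *
          (MvPowerSeries.coeff (e (Classical.choose h)).1
            (Ψ (Classical.choose h) (e (Classical.choose h)).2))⁻¹
      else MvPowerSeries.coeff d.1 (F d.2) - lowSum L hL Ψ e F d := by
  conv_lhs => rw [divC, WellFounded.fix_eq]
  rfl

/-- The quotients `Q i`. -/
noncomputable def Qdiv (L : Fin n → ℝ) (hL : ∀ i, 0 < L i)
    (Ψ : Fin q → Fin p → MvPowerSeries (Fin n) K) (e : Fin q → Idx n p)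
    (F : Fin p → MvPowerSeries (Fin n) K) (i : Fin q) : MvPowerSeries (Fin n) K :=
  fun β => if ((e i).1 + β, (e i).2) ∈ Delta e i then divC L hL Ψ e F ((e i).1 + β, (e i).2) else 0

/-- The remainder `R`. -/
noncomputable def Rdiv (L : Fin n → ℝ) (hL : ∀ i, 0 < L i)
    (Ψ : Fin q → Fin p → MvPowerSeries (Fin n) K) (e : Fin q → Idx n p)
    (F : Fin p → MvPowerSeries (Fin n) K) (j : Fin p) : MvPowerSeries (Fin n) K :=
  fun α => if (α, j) ∈ DeltaC e then divC L hL Ψ e F (α, j) else 0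

theorem coeff_Qdiv (L : Fin n → ℝ) (hL : ∀ i, 0 < L i)
    (Ψ : Fin q → Fin p → MvPowerSeries (Fin n) K) (e : Fin q → Idx n p)
    (F : Fin p → MvPowerSeries (Fin n) K) (i : Fin q) (β : Fin n →₀ ℕ) :
    MvPowerSeries.coeff β (Qdiv L hL Ψ e F i) =
      if ((e i).1 + β, (e i).2) ∈ Delta e i then divC L hL Ψ e F ((e i).1 + β, (e i).2) else 0 :=
  rfl

theorem coeff_Rdiv (L : Fin n → ℝ) (hL : ∀ i, 0 < L i)
    (Ψ : Fin q → Fin p → MvPowerSeries (Fin n) K) (e : Fin q → Idx n p)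
    (F : Fin p → MvPowerSeries (Fin n) K) (j : Fin p) (α : Fin n →₀ ℕ) :
    MvPowerSeries.coeff α (Rdiv L hL Ψ e F j) =
      if (α, j) ∈ DeltaC e then divC L hL Ψ e F (α, j) else 0 :=
  rfl

end Division

section Decomp

variable {n p q : ℕ} {K : Type} [Field K]

theorem decomp (L : Fin n → ℝ)
    (Ψ : Fin q → Fin p → MvPowerSeries (Fin n) K) (e : Fin q → Idx n p)
    (he : ∀ i, IsExpOf L (Ψ i) (e i))
    (G : Fin q → MvPowerSeries (Fin n) K)
    (hG : ∀ i β, MvPowerSeries.coeff β (G i) ≠ 0 → ((e i).1 + β, (e i).2) ∈ Delta e i)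
    (d : Idx n p) :
    ∑ i : Fin q, MvPowerSeries.coeff d.1 (G i * Ψ i d.2)
      = (∑ i : Fin q, ∑ bg ∈ Finset.HasAntidiagonal.antidiagonal d.1,
          if _ : ((e i).1 + bg.1, (e i).2) ∈ Delta e i ∧ idxLT L ((e i).1 + bg.1, (e i).2) d
          then MvPowerSeries.coeff bg.1 (G i) * MvPowerSeries.coeff bg.2 (Ψ i d.2) else 0)
        + (if h : ∃ i, d ∈ Delta e i
           then MvPowerSeries.coeff (d.1 - (e (Classical.choose h)).1) (G (Classical.choose h)) *
                MvPowerSeries.coeff (e (Classical.choose h)).1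
                  (Ψ (Classical.choose h) (e (Classical.choose h)).2)
           else 0) := by
  have key : ∀ i : Fin q, ∀ bg ∈ Finset.HasAntidiagonal.antidiagonal d.1,
      MvPowerSeries.coeff bg.1 (G i) * MvPowerSeries.coeff bg.2 (Ψ i d.2)
        = (if _ : ((e i).1 + bg.1, (e i).2) ∈ Delta e i ∧ idxLT L ((e i).1 + bg.1, (e i).2) d
            then MvPowerSeries.coeff bg.1 (G i) * MvPowerSeries.coeff bg.2 (Ψ i d.2) else 0)
          + (if ((e i).1 + bg.1, (e i).2) ∈ Delta e i ∧ ((e i).1 + bg.1, (e i).2) = d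
            then MvPowerSeries.coeff bg.1 (G i) * MvPowerSeries.coeff bg.2 (Ψ i d.2) else 0) := by
    intro i bg hbg
    by_cases hmem : ((e i).1 + bg.1, (e i).2) ∈ Delta e i
    · rcases idxLT_trichot L ((e i).1 + bg.1, (e i).2) d with hlt | heq | hgt
      · rw [dif_pos ⟨hmem, hlt⟩, if_neg, add_zero]
        rintro ⟨-, heq⟩
        rw [heq] at hlt
        exact idxLT_irrefl hlt
      · rw [dif_neg, if_pos ⟨hmem, heq⟩, zero_add]
        rintro ⟨-, hlt⟩
        rw [heq] at hlt
        exact idxLT_irrefl hlt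
      · have hc : MvPowerSeries.coeff bg.2 (Ψ i d.2) = 0 := by
          by_contra hc
          have hsupp : ((bg.2, d.2) : Idx n p) ∈ suppV (Ψ i) := hc
          have hle := idxLE_add ((he i).2 _ hsupp) bg.1
          rw [Finset.HasAntidiagonal.mem_antidiagonal] at hbg
          have hbg2 : bg.2 + bg.1 = d.1 := by rw [add_comm]; exact hbg
          rw [hbg2] at hle
          rcases hle with hle | hle
          · exact idxLT_asymm hle hgt
          · rw [hle] at hgt; exact idxLT_irrefl hgt
        rw [hc, mul_zero]
        simp
    · have h0 : MvPowerSeries.coeff bg.1 (G i) = 0 := by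
        by_contra hc; exact hmem (hG i bg.1 hc)
      simp [h0, hmem]
  have hmul : ∀ i : Fin q, MvPowerSeries.coeff d.1 (G i * Ψ i d.2)
      = ∑ bg ∈ Finset.HasAntidiagonal.antidiagonal d.1,
          MvPowerSeries.coeff bg.1 (G i) * MvPowerSeries.coeff bg.2 (Ψ i d.2) :=
    fun i => MvPowerSeries.coeff_mul d.1 _ _
  calc ∑ i : Fin q, MvPowerSeries.coeff d.1 (G i * Ψ i d.2)
      = ∑ i : Fin q, ∑ bg ∈ Finset.HasAntidiagonal.antidiagonal d.1,
          ((if _ : ((e i).1 + bg.1, (e i).2) ∈ Delta e i ∧ idxLT L ((e i).1 + bg.1, (e i).2) d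
            then MvPowerSeries.coeff bg.1 (G i) * MvPowerSeries.coeff bg.2 (Ψ i d.2) else 0)
          + (if ((e i).1 + bg.1, (e i).2) ∈ Delta e i ∧ ((e i).1 + bg.1, (e i).2) = d
            then MvPowerSeries.coeff bg.1 (G i) * MvPowerSeries.coeff bg.2 (Ψ i d.2) else 0)) := by
        refine Finset.sum_congr rfl fun i _ => ?_
        rw [hmul i]
        exact Finset.sum_congr rfl (key i)
    _ = (∑ i : Fin q, ∑ bg ∈ Finset.HasAntidiagonal.antidiagonal d.1,
          if _ : ((e i).1 + bg.1, (e i).2) ∈ Delta e i ∧ idxLT L ((e i).1 + bg.1, (e i).2) d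
          then MvPowerSeries.coeff bg.1 (G i) * MvPowerSeries.coeff bg.2 (Ψ i d.2) else 0)
        + ∑ i : Fin q, ∑ bg ∈ Finset.HasAntidiagonal.antidiagonal d.1,
          (if ((e i).1 + bg.1, (e i).2) ∈ Delta e i ∧ ((e i).1 + bg.1, (e i).2) = d
            then MvPowerSeries.coeff bg.1 (G i) * MvPowerSeries.coeff bg.2 (Ψ i d.2) else 0) := by
        rw [← Finset.sum_add_distrib]
        exact Finset.sum_congr rfl fun i _ => by rw [← Finset.sum_add_distrib]
    _ = _ := by
        congr 1
        by_cases h : ∃ i, d ∈ Delta e i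
        · rw [dif_pos h]
          set i₀ := Classical.choose h with hi₀
          have hd : d ∈ Delta e i₀ := Classical.choose_spec h
          obtain ⟨hj, β₀, hβ⟩ := (mem_delta_iff.mp hd).1
          rw [Finset.sum_eq_single i₀]
          · rw [Finset.sum_eq_single ((β₀, (e i₀).1) : (Fin n →₀ ℕ) × (Fin n →₀ ℕ))]
            · rw [if_pos]
              · have h1 : d.1 - (e i₀).1 = β₀ := by rw [hβ, add_tsub_cancel_left]
                have h2 : ((e i₀).2 : Fin p) = d.2 := hj.symm
                rw [h1, h2]
              · constructor
                · have : (((e i₀).1 + β₀, (e i₀).2) : Idx n p) = d := by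
                    rw [← hβ, ← hj]
                  rw [this]; exact hd
                · rw [← hβ, ← hj]
            · rintro bg hbg hne
              rw [if_neg]
              rintro ⟨-, heq⟩
              apply hne
              rw [Finset.HasAntidiagonal.mem_antidiagonal] at hbg
              have h1 : (e i₀).1 + bg.1 = d.1 := congrArg Prod.fst heq
              have h2 : bg.1 = β₀ := by
                have := h1.trans hβ
                exact add_left_cancel this
              have h3 : bg.2 = (e i₀).1 := by
                have h4 : bg.1 + bg.2 = bg.1 + (e i₀).1 := by
                  rw [hbg, hβ, h2, add_comm]
                exact add_left_cancel h4
              exact Prod.ext h2 h3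
            · intro hni
              exfalso
              apply hni
              rw [Finset.HasAntidiagonal.mem_antidiagonal, add_comm, ← hβ]
          · rintro i - hne
            refine Finset.sum_eq_zero fun bg _ => ?_
            rw [if_neg]
            rintro ⟨hmem, heq⟩
            rw [heq] at hmem
            exact delta_disjoint hne hmem hd
          · intro h; exact absurd (Finset.mem_univ i₀) h
        · rw [dif_neg h]
          refine Finset.sum_eq_zero fun i _ => Finset.sum_eq_zero fun bg _ => ?_
          rw [if_neg]
          rintro ⟨hmem, heq⟩
          rw [heq] at hmem
          exact h ⟨i, hmem⟩

end Decomp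

section Main

variable {n p q : ℕ} {K : Type} [Field K]
variable (L : Fin n → ℝ) (hL : ∀ i, 0 < L i)
variable (Ψ : Fin q → Fin p → MvPowerSeries (Fin n) K) (e : Fin q → Idx n p)
variable (F : Fin p → MvPowerSeries (Fin n) K)

theorem Qdiv_supp (i : Fin q) (β : Fin n →₀ ℕ)
    (h : MvPowerSeries.coeff β (Qdiv L hL Ψ e F i) ≠ 0) :
    ((e i).1 + β, (e i).2) ∈ Delta e i := by
  rw [coeff_Qdiv] at h
  by_contra hc
  rw [if_neg hc] at h
  exact h rfl

theorem Rdiv_supp : suppV (Rdiv L hL Ψ e F) ⊆ DeltaC e := by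
  intro d hd
  have h : MvPowerSeries.coeff d.1 (Rdiv L hL Ψ e F d.2) ≠ 0 := hd
  rw [coeff_Rdiv] at h
  by_contra hc
  rw [if_neg hc] at h
  exact h rfl

theorem main_eq (he : ∀ i, IsExpOf L (Ψ i) (e i))
    (hu : ∀ i, MvPowerSeries.coeff (e i).1 (Ψ i (e i).2) ≠ 0) (d : Idx n p) :
    MvPowerSeries.coeff d.1 (F d.2)
      = (∑ i : Fin q, MvPowerSeries.coeff d.1 (Qdiv L hL Ψ e F i * Ψ i d.2))
        + MvPowerSeries.coeff d.1 (Rdiv L hL Ψ e F d.2) := by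
  rw [decomp L Ψ e he _ (Qdiv_supp L hL Ψ e F) d]
  have hlow : (∑ i : Fin q, ∑ bg ∈ Finset.HasAntidiagonal.antidiagonal d.1,
      if _ : ((e i).1 + bg.1, (e i).2) ∈ Delta e i ∧ idxLT L ((e i).1 + bg.1, (e i).2) d
      then MvPowerSeries.coeff bg.1 (Qdiv L hL Ψ e F i) * MvPowerSeries.coeff bg.2 (Ψ i d.2)
      else 0) = lowSum L hL Ψ e F d := by
    refine Finset.sum_congr rfl fun i _ => Finset.sum_congr rfl fun bg _ => ?_
    by_cases h : ((e i).1 + bg.1, (e i).2) ∈ Delta e i ∧ idxLT L ((e i).1 + bg.1, (e i).2) d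
    · rw [dif_pos h, dif_pos h, coeff_Qdiv, if_pos h.1]
    · rw [dif_neg h, dif_neg h]
  rw [hlow]
  rw [coeff_Rdiv]
  by_cases h : ∃ i, d ∈ Delta e i
  · rw [dif_pos h]
    set i₀ := Classical.choose h with hi₀
    have hd : d ∈ Delta e i₀ := Classical.choose_spec h
    obtain ⟨hj, β₀, hβ⟩ := (mem_delta_iff.mp hd).1
    have hpt : (((e i₀).1 + (d.1 - (e i₀).1), (e i₀).2) : Idx n p) = d := by
      have h1 : d.1 - (e i₀).1 = β₀ := by rw [hβ, add_tsub_cancel_left]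
      rw [h1, ← hβ, ← hj]
    have hQ : MvPowerSeries.coeff (d.1 - (e i₀).1) (Qdiv L hL Ψ e F i₀) = divC L hL Ψ e F d := by
      rw [coeff_Qdiv, if_pos (by rw [hpt]; exact hd), hpt]
    have hRC : ((d.1, d.2) : Idx n p) ∉ DeltaC e := by
      intro hc
      exact hc (Set.mem_iUnion.mpr ⟨i₀, hd⟩)
    rw [if_neg hRC, hQ, divC_eq, dif_pos h, ← hi₀]
    rw [mul_assoc, inv_mul_cancel₀ (hu i₀), mul_one]
    ring
  · rw [dif_neg h]
    have hRC : ((d.1, d.2) : Idx n p) ∈ DeltaC e := by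
      intro hc
      rw [Set.mem_iUnion] at hc
      exact h hc
    rw [if_pos hRC, divC_eq, dif_neg h]
    ring

theorem divC_zero (he : ∀ i, IsExpOf L (Ψ i) (e i)) {dF : Idx n p} (hdF : IsExpOf L F dF) :
    ∀ d, idxLT L d dF → divC L hL Ψ e F d = 0 := by
  intro d
  refine (idxLT_wf L hL).induction
    (C := fun d => idxLT L d dF → divC L hL Ψ e F d = 0) d ?_
  intro x IH hx
  have hS : lowSum L hL Ψ e F x = 0 := by
    refine Finset.sum_eq_zero fun i _ => Finset.sum_eq_zero fun bg _ => ?_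
    by_cases h : ((e i).1 + bg.1, (e i).2) ∈ Delta e i ∧ idxLT L ((e i).1 + bg.1, (e i).2) x
    · rw [dif_pos h, IH _ h.2 (idxLT_trans h.2 hx), zero_mul]
    · rw [dif_neg h]
  have hF : MvPowerSeries.coeff x.1 (F x.2) = 0 := by
    by_contra hc
    rcases hdF.2 x hc with h | h
    · exact idxLT_asymm h hx
    · rw [h] at hx; exact idxLT_irrefl hx
  rw [divC_eq]
  split
  · rw [hF, hS, sub_zero, zero_mul]
  · rw [hF, hS, sub_zero]

theorem divC_mem (B : Subring K)
    (hF : ∀ d : Idx n p, MvPowerSeries.coeff d.1 (F d.2) ∈ B)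
    (hΨ : ∀ i j γ, MvPowerSeries.coeff γ (Ψ i j) ∈ B)
    (hinv : ∀ i, (MvPowerSeries.coeff (e i).1 (Ψ i (e i).2))⁻¹ ∈ B) :
    ∀ d, divC L hL Ψ e F d ∈ B := by
  intro d
  refine (idxLT_wf L hL).induction (C := fun d => divC L hL Ψ e F d ∈ B) d ?_
  intro x IH
  have hS : lowSum L hL Ψ e F x ∈ B := by
    refine Subring.sum_mem _ fun i _ => Subring.sum_mem _ fun bg _ => ?_
    by_cases h : ((e i).1 + bg.1, (e i).2) ∈ Delta e i ∧ idxLT L ((e i).1 + bg.1, (e i).2) x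
    · rw [dif_pos h]
      exact Subring.mul_mem _ (IH _ h.2) (hΨ _ _ _)
    · rw [dif_neg h]
      exact Subring.zero_mem _
  rw [divC_eq]
  split
  · exact Subring.mul_mem _ (Subring.sub_mem _ (hF x) hS) (hinv _)
  · exact Subring.sub_mem _ (hF x) hS

end Main

section Uniq

variable {n p q : ℕ} {K : Type} [Field K]
variable (L : Fin n → ℝ)
variable (Ψ : Fin q → Fin p → MvPowerSeries (Fin n) K) (e : Fin q → Idx n p)
variable (F : Fin p → MvPowerSeries (Fin n) K)

theorem division_unique (hL : ∀ i, 0 < L i) (he : ∀ i, IsExpOf L (Ψ i) (e i))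
    (hu : ∀ i, MvPowerSeries.coeff (e i).1 (Ψ i (e i).2) ≠ 0)
    (Q₁ Q₂ : Fin q → MvPowerSeries (Fin n) K) (R₁ R₂ : Fin p → MvPowerSeries (Fin n) K)
    (hco₁ : ∀ d : Idx n p, MvPowerSeries.coeff d.1 (F d.2)
      = (∑ i : Fin q, MvPowerSeries.coeff d.1 (Q₁ i * Ψ i d.2))
        + MvPowerSeries.coeff d.1 (R₁ d.2))
    (hco₂ : ∀ d : Idx n p, MvPowerSeries.coeff d.1 (F d.2)
      = (∑ i : Fin q, MvPowerSeries.coeff d.1 (Q₂ i * Ψ i d.2))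
        + MvPowerSeries.coeff d.1 (R₂ d.2))
    (hQ₁ : ∀ i β, MvPowerSeries.coeff β (Q₁ i) ≠ 0 → ((e i).1 + β, (e i).2) ∈ Delta e i)
    (hQ₂ : ∀ i β, MvPowerSeries.coeff β (Q₂ i) ≠ 0 → ((e i).1 + β, (e i).2) ∈ Delta e i)
    (hR₁ : suppV R₁ ⊆ DeltaC e) (hR₂ : suppV R₂ ⊆ DeltaC e) :
    Q₁ = Q₂ ∧ R₁ = R₂ := by
  have key : ∀ d : Idx n p,
      (∀ i (β : Fin n →₀ ℕ), (((e i).1 + β, (e i).2) : Idx n p) = d →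
        MvPowerSeries.coeff β (Q₁ i) = MvPowerSeries.coeff β (Q₂ i)) ∧
      MvPowerSeries.coeff d.1 (R₁ d.2) = MvPowerSeries.coeff d.1 (R₂ d.2) := by
    intro d
    refine (idxLT_wf L hL).induction
      (C := fun d => (∀ i (β : Fin n →₀ ℕ), (((e i).1 + β, (e i).2) : Idx n p) = d →
          MvPowerSeries.coeff β (Q₁ i) = MvPowerSeries.coeff β (Q₂ i)) ∧
        MvPowerSeries.coeff d.1 (R₁ d.2) = MvPowerSeries.coeff d.1 (R₂ d.2)) d ?_
    intro x IH
    have h1 := hco₁ x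
    have h2 := hco₂ x
    rw [decomp L Ψ e he Q₁ hQ₁ x] at h1
    rw [decomp L Ψ e he Q₂ hQ₂ x] at h2
    have hlow : (∑ i : Fin q, ∑ bg ∈ Finset.HasAntidiagonal.antidiagonal x.1,
        if _ : ((e i).1 + bg.1, (e i).2) ∈ Delta e i ∧ idxLT L ((e i).1 + bg.1, (e i).2) x
        then MvPowerSeries.coeff bg.1 (Q₁ i) * MvPowerSeries.coeff bg.2 (Ψ i x.2) else 0)
        = (∑ i : Fin q, ∑ bg ∈ Finset.HasAntidiagonal.antidiagonal x.1,
        if _ : ((e i).1 + bg.1, (e i).2) ∈ Delta e i ∧ idxLT L ((e i).1 + bg.1, (e i).2) x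
        then MvPowerSeries.coeff bg.1 (Q₂ i) * MvPowerSeries.coeff bg.2 (Ψ i x.2) else 0) := by
      refine Finset.sum_congr rfl fun i _ => Finset.sum_congr rfl fun bg _ => ?_
      by_cases h : ((e i).1 + bg.1, (e i).2) ∈ Delta e i ∧ idxLT L ((e i).1 + bg.1, (e i).2) x
      · rw [dif_pos h, dif_pos h, (IH _ h.2).1 i bg.1 rfl]
      · rw [dif_neg h, dif_neg h]
    rw [hlow] at h1
    have h3 := h1.symm.trans h2
    rw [add_assoc, add_assoc] at h3
    have h4 := add_left_cancel h3
    by_cases h : ∃ i, x ∈ Delta e i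
    · have hd : x ∈ Delta e (Classical.choose h) := Classical.choose_spec h
      have hR₁0 : MvPowerSeries.coeff x.1 (R₁ x.2) = 0 := by
        by_contra hc
        exact (hR₁ hc) (Set.mem_iUnion.mpr ⟨Classical.choose h, hd⟩)
      have hR₂0 : MvPowerSeries.coeff x.1 (R₂ x.2) = 0 := by
        by_contra hc
        exact (hR₂ hc) (Set.mem_iUnion.mpr ⟨Classical.choose h, hd⟩)
      rw [dif_pos h, dif_pos h, hR₁0, hR₂0, add_zero, add_zero] at h4
      have hQQ : MvPowerSeries.coeff (x.1 - (e (Classical.choose h)).1) (Q₁ (Classical.choose h))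
          = MvPowerSeries.coeff (x.1 - (e (Classical.choose h)).1) (Q₂ (Classical.choose h)) :=
        mul_right_cancel₀ (hu _) h4
      constructor
      · intro i β hβ
        by_cases hii : i = Classical.choose h
        · subst hii
          have hβ' : β = x.1 - (e (Classical.choose h)).1 := by
            have hx1 : x.1 = (e (Classical.choose h)).1 + β := (congrArg Prod.fst hβ).symm
            rw [hx1, add_tsub_cancel_left]
          rw [hβ']
          exact hQQ
        · have hz₁ : MvPowerSeries.coeff β (Q₁ i) = 0 := by
            by_contra hc
            exact delta_disjoint hii (hβ ▸ hQ₁ i β hc) hd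
          have hz₂ : MvPowerSeries.coeff β (Q₂ i) = 0 := by
            by_contra hc
            exact delta_disjoint hii (hβ ▸ hQ₂ i β hc) hd
          rw [hz₁, hz₂]
      · rw [hR₁0, hR₂0]
    · rw [dif_neg h, dif_neg h, zero_add, zero_add] at h4
      constructor
      · intro i β hβ
        have hz₁ : MvPowerSeries.coeff β (Q₁ i) = 0 := by
          by_contra hc
          exact h ⟨i, hβ ▸ hQ₁ i β hc⟩
        have hz₂ : MvPowerSeries.coeff β (Q₂ i) = 0 := by
          by_contra hc
          exact h ⟨i, hβ ▸ hQ₂ i β hc⟩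
        rw [hz₁, hz₂]
      · exact h4
  constructor
  · funext i
    exact MvPowerSeries.ext fun β => (key ((e i).1 + β, (e i).2)).1 i β rfl
  · funext j
    exact MvPowerSeries.ext fun α => (key (α, j)).2

end Uniq
/-- **Hironaka's formal division algorithm.** -/
theorem stmt3 {n p q : ℕ} {A : Type} [CommRing A] [IsDomain A]
    (L : Fin n → ℝ) (hL : ∀ i, 0 < L i)
    (Φ : Fin q → (Fin p → MvPowerSeries (Fin n) A)) (hΦ : ∀ i, Φ i ≠ 0)
    (e : Fin q → Idx n p) (he : ∀ i, IsExpOf L (Φ i) (e i))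
    (B : Subring (FractionRing A))
    (hBA : ∀ a : A, algebraMap A (FractionRing A) a ∈ B)
    (hBinv : ∀ i, (algebraMap A (FractionRing A)
      (MvPowerSeries.coeff (e i).1 (Φ i (e i).2)))⁻¹ ∈ B)
    (F : Fin p → MvPowerSeries (Fin n) (FractionRing A))
    (hF : ∀ d : Idx n p, MvPowerSeries.coeff d.1 (F d.2) ∈ B) :
    ∃ (Q : Fin q → MvPowerSeries (Fin n) (FractionRing A))
      (R : Fin p → MvPowerSeries (Fin n) (FractionRing A)),
      -- Q_i ∈ B⟦x⟧ and R ∈ B⟦x⟧ᵖ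
      (∀ i α, MvPowerSeries.coeff α (Q i) ∈ B) ∧
      (∀ d : Idx n p, MvPowerSeries.coeff d.1 (R d.2) ∈ B) ∧
      -- F = Σ Q_i Φ_i + R
      (∀ j, F j = (∑ i, Q i * MvPowerSeries.map (algebraMap A (FractionRing A)) (Φ i j))
        + R j) ∧
      -- (α_i, j_i) + supp Q_i ⊆ Δ_i
      (∀ i, ∀ β : Fin n →₀ ℕ, MvPowerSeries.coeff β (Q i) ≠ 0 →
        ((e i).1 + β, (e i).2) ∈ Delta e i) ∧
      -- supp R ⊆ Δ
      suppV R ⊆ DeltaC e ∧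
      -- moreover: (α_i,j_i) + exp Q_i ≥ exp F and exp R ≥ exp F
      (∀ dF : Idx n p, IsExpOf L F dF →
        (∀ i, ∀ β : Fin n →₀ ℕ, MvPowerSeries.coeff β (Q i) ≠ 0 →
          idxLE L dF ((e i).1 + β, (e i).2)) ∧
        (∀ d ∈ suppV R, idxLE L dF d)) ∧
      -- uniqueness
      (∀ (Q' : Fin q → MvPowerSeries (Fin n) (FractionRing A))
         (R' : Fin p → MvPowerSeries (Fin n) (FractionRing A)),
        (∀ i α, MvPowerSeries.coeff α (Q' i) ∈ B) →
        (∀ d : Idx n p, MvPowerSeries.coeff d.1 (R' d.2) ∈ B) →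
        (∀ j, F j = (∑ i, Q' i *
          MvPowerSeries.map (algebraMap A (FractionRing A)) (Φ i j)) + R' j) →
        (∀ i, ∀ β : Fin n →₀ ℕ, MvPowerSeries.coeff β (Q' i) ≠ 0 →
          ((e i).1 + β, (e i).2) ∈ Delta e i) →
        suppV R' ⊆ DeltaC e →
        Q' = Q ∧ R' = R) := by

  classical
  set Ψ : Fin q → Fin p → MvPowerSeries (Fin n) (FractionRing A) :=
    fun i j => MvPowerSeries.map (algebraMap A (FractionRing A)) (Φ i j) with hΨdef
  have hinj : Function.Injective (algebraMap A (FractionRing A)) :=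
    IsFractionRing.injective A (FractionRing A)
  have hsupp : ∀ i (d : Idx n p), d ∈ suppV (Ψ i) ↔ d ∈ suppV (Φ i) := by
    intro i d
    simp only [suppV, Set.mem_setOf_eq, hΨdef, MvPowerSeries.coeff_map]
    constructor
    · intro h hc; exact h (by rw [hc, map_zero])
    · intro h hc; exact h (hinj (by rw [hc, map_zero]))
  have heΨ : ∀ i, IsExpOf L (Ψ i) (e i) := fun i =>
    ⟨(hsupp i (e i)).mpr (he i).1, fun d' hd' => (he i).2 d' ((hsupp i d').mp hd')⟩
  have hu : ∀ i, MvPowerSeries.coeff (e i).1 (Ψ i (e i).2) ≠ 0 :=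
    fun i => (heΨ i).1
  have hΨB : ∀ i j γ, MvPowerSeries.coeff γ (Ψ i j) ∈ B := by
    intro i j γ
    rw [hΨdef]
    simp only [MvPowerSeries.coeff_map]
    exact hBA _
  have hinv : ∀ i, (MvPowerSeries.coeff (e i).1 (Ψ i (e i).2))⁻¹ ∈ B := by
    intro i
    rw [hΨdef]
    simp only [MvPowerSeries.coeff_map]
    exact hBinv i
  refine ⟨Qdiv L hL Ψ e F, Rdiv L hL Ψ e F, ?_, ?_, ?_, ?_, ?_, ?_, ?_⟩
  · intro i α
    rw [coeff_Qdiv]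
    split
    · exact divC_mem L hL Ψ e F B hF hΨB hinv _
    · exact B.zero_mem
  · intro d
    rw [coeff_Rdiv]
    split
    · exact divC_mem L hL Ψ e F B hF hΨB hinv _
    · exact B.zero_mem
  · intro j
    refine MvPowerSeries.ext fun α => ?_
    have h := main_eq L hL Ψ e F heΨ hu (α, j)
    rw [map_add, map_sum]
    exact h
  · exact fun i β h => Qdiv_supp L hL Ψ e F i β h
  · exact Rdiv_supp L hL Ψ e F
  · intro dF hdF
    constructor
    · intro i β hQβ
      have hne : divC L hL Ψ e F ((e i).1 + β, (e i).2) ≠ 0 := by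
        intro h0
        apply hQβ
        rw [coeff_Qdiv, h0]
        simp
      rcases idxLT_trichot L dF ((e i).1 + β, (e i).2) with h | h | h
      · exact Or.inl h
      · exact Or.inr h
      · exact absurd (divC_zero L hL Ψ e F heΨ hdF _ h) hne
    · intro d hd
      have hne : divC L hL Ψ e F d ≠ 0 := by
        intro h0
        apply hd
        show MvPowerSeries.coeff d.1 (Rdiv L hL Ψ e F d.2) = 0
        rw [coeff_Rdiv, h0]
        simp
      rcases idxLT_trichot L dF d with h | h | h
      · exact Or.inl h
      · exact Or.inr h
      · exact absurd (divC_zero L hL Ψ e F heΨ hdF _ h) hne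
  · intro Q' R' _ _ hEq' hQ's hR's
    have hco₁ : ∀ d : Idx n p, MvPowerSeries.coeff d.1 (F d.2)
        = (∑ i : Fin q, MvPowerSeries.coeff d.1 (Q' i * Ψ i d.2))
          + MvPowerSeries.coeff d.1 (R' d.2) := by
      intro d
      rw [hEq' d.2, map_add, map_sum]
    exact division_unique L Ψ e F hL heΨ hu Q' (Qdiv L hL Ψ e F) R' (Rdiv L hL Ψ e F)
      hco₁ (main_eq L hL Ψ e F heΨ hu) hQ's (Qdiv_supp L hL Ψ e F) hR's (Rdiv_supp L hL Ψ e F)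
end

section
/- (Borel's lemma with parameter.) Let Λ be a C^m submanifold of ℝⁿ and let F(a,x) = Σ_{|α|≤m} f_α(a)x^α/α! ∈ C⁰(Λ)[x] be a polynomial of degree ≤ m in x with continuous coefficients on Λ. Then F is a C^m Whitney field on Λ if and only if the truncation F^{m−1}(a,x) = Σ_{|α|≤m−1} f_α(a)x^α/α! has C¹ coefficients on Λ and, for all a ∈ Λ and all u ∈ T_aΛ (the tangent space of Λ at a), D_{a,u}F^{m−1}(a,x) = D_{x,u}F(a,x), where D_{a,u} denotes the directional derivative with respect to the parameter a in the direction u, and D_{x,u} denotes the formal directional derivative with respect to x in the direction u. -/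
open Classical

/-- Total degree `|α|` of a multiindex. -/
def mdeg {n : ℕ} (α : Fin n → ℕ) : ℕ := ∑ i, α i

/-- Factorial `α!` of a multiindex. -/
def mfact {n : ℕ} (α : Fin n → ℕ) : ℕ := ∏ i, (α i).factorial

/-- Monomial `x^α`. -/
def mpow {n : ℕ} (x : Fin n → ℝ) (α : Fin n → ℕ) : ℝ := ∏ i, x i ^ α i

/-- The (finite) set of multiindices of total degree `≤ k`. -/
def midx (n k : ℕ) : Finset (Fin n → ℕ) :=
  (Finset.Iic fun _ : Fin n => k).filter fun β => mdeg β ≤ k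

/-- First-order partial derivative in the `i`-th coordinate direction. -/
noncomputable def pd {n : ℕ} (i : Fin n) (f : (Fin n → ℝ) → ℝ) : (Fin n → ℝ) → ℝ :=
  fun x => fderiv ℝ f x (Pi.single i 1)

/-- The partial derivative `∂^{|α|}f/∂x^α`. -/
noncomputable def pdm {n : ℕ} (α : Fin n → ℕ) (f : (Fin n → ℝ) → ℝ) : (Fin n → ℝ) → ℝ :=
  ((List.finRange n).foldr (fun i g => (pd i)^[α i] ∘ g) id) f

/-- A family `(f_α)_{|α| ≤ m}` of functions on `E` is a `C^m`-Whitney field on `E`: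
the coefficients are continuous on `E` and, for all `|α| ≤ m`,
`(∂^α F)(a,0) − (∂^α F)(b,a−b) = o(|a−b|^{m−|α|})` as `a, b ∈ E` tend to a point of `E`,
where `F(a,x) = Σ_{|α|≤m} f_α(a) x^α/α!` and `∂` is formal differentiation in `x`. -/
def IsWhitneyField {n : ℕ} (m : ℕ) (E : Set (Fin n → ℝ))
    (f : (Fin n → ℕ) → (Fin n → ℝ) → ℝ) : Prop :=
  (∀ α, mdeg α ≤ m → ContinuousOn (f α) E) ∧
  ∀ α, mdeg α ≤ m → ∀ c ∈ E, ∀ ε > (0:ℝ), ∃ δ > (0:ℝ), ∀ a ∈ E, ∀ b ∈ E,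
    dist a c < δ → dist b c < δ →
    |f α a - ∑ β ∈ midx n (m - mdeg α), f (α + β) b * mpow (a - b) β / (mfact β : ℝ)|
      ≤ ε * dist a b ^ (m - mdeg α)

/-- `M` is, near `x`, a `C^k` submanifold of dimension `d` of `ι → ℝ`: there is a local `C^k`
parametrization of `M` by an open subset of `ℝ^d`, with a `C^k` left inverse defined on an
ambient neighbourhood of `x`. -/
def IsSubmanifoldAt {ι : Type} [Fintype ι] (k : WithTop ℕ∞) (M : Set (ι → ℝ)) (d : ℕ)
    (x : ι → ℝ) : Prop :=
  ∃ (U : Set (ι → ℝ)) (W : Set (Fin d → ℝ))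
    (param : (Fin d → ℝ) → (ι → ℝ)) (chart : (ι → ℝ) → (Fin d → ℝ)),
    IsOpen U ∧ x ∈ U ∧ IsOpen W ∧
    ContDiffOn ℝ k param W ∧ ContDiffOn ℝ k chart U ∧
    param '' W = M ∩ U ∧ (∀ w ∈ W, chart (param w) = w) ∧ (∀ y ∈ M ∩ U, param (chart y) = y)

/-- `M` is a `C^k` submanifold of `ι → ℝ` of pure dimension `d`. -/
def IsSubmanifoldOfDim {ι : Type} [Fintype ι] (k : WithTop ℕ∞) (M : Set (ι → ℝ)) (d : ℕ) : Prop :=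
  ∀ x ∈ M, IsSubmanifoldAt k M d x

/-- `M` is a `C^k` submanifold of `ι → ℝ` (components may have different dimensions). -/
def IsSubmanifold {ι : Type} [Fintype ι] (k : WithTop ℕ∞) (M : Set (ι → ℝ)) : Prop :=
  ∀ x ∈ M, ∃ d : ℕ, IsSubmanifoldAt k M d x

open Topology Filter Set

section Aux
variable {n : ℕ}

lemma mem_midx {n k : ℕ} {β : Fin n → ℕ} : β ∈ midx n k ↔ mdeg β ≤ k := by
  constructor
  · intro h; exact (Finset.mem_filter.1 h).2
  · intro h
    refine Finset.mem_filter.2 ⟨Finset.mem_Iic.2 ?_, h⟩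
    intro i
    calc β i ≤ mdeg β := Finset.single_le_sum (fun j _ => Nat.zero_le _) (Finset.mem_univ i)
    _ ≤ k := h

lemma mfact_pos {n : ℕ} (β : Fin n → ℕ) : 0 < mfact β :=
  Finset.prod_pos fun i _ => Nat.factorial_pos _

lemma mfact_ne_zero {n : ℕ} (β : Fin n → ℕ) : (mfact β : ℝ) ≠ 0 := by
  exact_mod_cast (mfact_pos β).ne'

lemma mdeg_zero {n : ℕ} : mdeg (0 : Fin n → ℕ) = 0 := by simp [mdeg]

lemma mdeg_eq_zero {n : ℕ} {β : Fin n → ℕ} : mdeg β = 0 ↔ β = 0 := by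
  constructor
  · intro h; funext i
    have := Finset.sum_eq_zero_iff.1 h i (Finset.mem_univ i)
    simpa using this
  · rintro rfl; simp [mdeg]

lemma mdeg_add {n : ℕ} (α β : Fin n → ℕ) : mdeg (α + β) = mdeg α + mdeg β := by
  simp [mdeg, Finset.sum_add_distrib]

lemma mdeg_single {n : ℕ} (i : Fin n) : mdeg (Pi.single i 1) = 1 := by
  simp [mdeg]

lemma mfact_zero {n : ℕ} : mfact (0 : Fin n → ℕ) = 1 := by simp [mfact]

lemma mfact_single {n : ℕ} (i : Fin n) : mfact (Pi.single i (1:ℕ)) = 1 := by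
  classical
  unfold mfact
  apply Finset.prod_eq_one
  intro j _
  by_cases h : j = i
  · subst h; simp
  · simp [Pi.single_apply, h]

lemma mpow_zero_arg {n : ℕ} (β : Fin n → ℕ) (hβ : β ≠ 0) : mpow (0 : Fin n → ℝ) β = 0 := by
  obtain ⟨i, hi⟩ : ∃ i, β i ≠ 0 := by
    by_contra h
    push_neg at h
    exact hβ (funext fun i => h i)
  unfold mpow
  apply Finset.prod_eq_zero (Finset.mem_univ i)
  simp [zero_pow hi]

lemma mpow_zero_idx {n : ℕ} (x : Fin n → ℝ) : mpow x 0 = 1 := by simp [mpow]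

lemma mpow_single {n : ℕ} (x : Fin n → ℝ) (i : Fin n) : mpow x (Pi.single i 1) = x i := by
  classical
  unfold mpow
  rw [Finset.prod_eq_single i]
  · simp
  · intro j _ hj; simp [Pi.single_apply, hj]
  · intro h; exact absurd (Finset.mem_univ i) h

lemma zero_mem_midx {n k : ℕ} : (0 : Fin n → ℕ) ∈ midx n k := by
  simp [mem_midx, mdeg_zero]

lemma sum_midx_self {n k : ℕ} (g : (Fin n → ℕ) → ℝ) :
    ∑ β ∈ midx n k, g β * mpow (0 : Fin n → ℝ) β / (mfact β : ℝ) = g 0 := by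
  rw [Finset.sum_eq_single (0 : Fin n → ℕ)]
  · simp [mpow_zero_idx, mfact_zero]
  · intro β _ hβ
    simp [mpow_zero_arg β hβ]
  · intro h; exact absurd zero_mem_midx h

lemma abs_mpow_le {n : ℕ} (z : Fin n → ℝ) (β : Fin n → ℕ) :
    |mpow z β| ≤ ‖z‖ ^ mdeg β := by
  unfold mpow mdeg
  rw [Finset.abs_prod, ← Finset.prod_pow_eq_pow_sum]
  apply Finset.prod_le_prod
  · intro i _; positivity
  · intro i _
    rw [abs_pow]
    exact pow_le_pow_left₀ (abs_nonneg _) (norm_le_pi_norm z i) _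

-- new material

lemma add_single_sub_single {n : ℕ} (β : Fin n → ℕ) (i : Fin n) :
    (β + Pi.single i 1) - Pi.single i 1 = β := by
  funext j
  by_cases h : j = i
  · subst h; simp
  · simp [Pi.single_apply, h]

lemma sub_single_add_single {n : ℕ} (β : Fin n → ℕ) (i : Fin n) (h : β i ≠ 0) :
    (β - Pi.single i 1) + Pi.single i 1 = β := by
  funext j
  by_cases hj : j = i
  · subst hj
    simp only [Pi.add_apply, Pi.sub_apply, Pi.single_eq_same]
    omega
  · simp [Pi.single_apply, hj]

lemma mfact_add_single {n : ℕ} (β : Fin n → ℕ) (i : Fin n) :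
    mfact (β + Pi.single i 1) = mfact β * (β i + 1) := by
  classical
  unfold mfact
  rw [← Finset.prod_erase_mul _ _ (Finset.mem_univ i),
      ← Finset.prod_erase_mul _ _ (Finset.mem_univ i)]
  have h1 : ∀ j ∈ Finset.univ.erase i, ((β + Pi.single i 1 : Fin n → ℕ) j).factorial = (β j).factorial := by
    intro j hj
    have : j ≠ i := (Finset.mem_erase.1 hj).1
    simp [Pi.single_apply, this]
  rw [Finset.prod_congr rfl h1]
  have : (β + Pi.single i 1 : Fin n → ℕ) i = β i + 1 := by simp
  rw [this, Nat.factorial_succ]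
  ring

lemma mpow_reindex {n : ℕ} (k : ℕ) (i : Fin n) (g : (Fin n → ℕ) → ℝ) (z : Fin n → ℝ) :
    ∑ β ∈ midx n (k + 1), g β * ((β i : ℝ) * mpow z (β - Pi.single i 1)) / (mfact β : ℝ)
      = ∑ β ∈ midx n k, g (β + Pi.single i 1) * mpow z β / (mfact (β + Pi.single i 1) : ℝ)
          * ((β i : ℝ) + 1) := by
  classical
  rw [← Finset.sum_filter_add_sum_filter_not (midx n (k+1)) (fun β => β i ≠ 0)]
  have h2 : ∑ β ∈ (midx n (k+1)).filter (fun β => ¬ β i ≠ 0),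
      g β * ((β i : ℝ) * mpow z (β - Pi.single i 1)) / (mfact β : ℝ) = 0 := by
    apply Finset.sum_eq_zero
    intro β hβ
    have : β i = 0 := by simpa using (Finset.mem_filter.1 hβ).2
    simp [this]
  rw [h2, add_zero]
  apply Finset.sum_nbij' (fun β => β - Pi.single i 1) (fun β => β + Pi.single i 1)
  · intro β hβ
    obtain ⟨hβ1, hβ2⟩ := Finset.mem_filter.1 hβ
    have hmem := mem_midx.1 hβ1
    rw [mem_midx]
    have : mdeg ((β - Pi.single i 1) + Pi.single i 1) = mdeg (β - Pi.single i 1) + 1 := by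
      rw [mdeg_add, mdeg_single]
    rw [sub_single_add_single β i (by simpa using hβ2)] at this
    omega
  · intro β hβ
    refine Finset.mem_filter.2 ⟨?_, ?_⟩
    · rw [mem_midx, mdeg_add, mdeg_single]
      exact Nat.add_le_add_right (mem_midx.1 hβ) 1
    · simp
  · intro β hβ
    exact sub_single_add_single β i (by simpa using (Finset.mem_filter.1 hβ).2)
  · intro β hβ
    exact add_single_sub_single β i
  · intro β hβ
    obtain ⟨hβ1, hβ2⟩ := Finset.mem_filter.1 hβ
    have hβi : β i ≠ 0 := by simpa using hβ2
    rw [sub_single_add_single β i hβi]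
    have h3 : mfact β = mfact (β - Pi.single i 1) * ((β - Pi.single i 1 : Fin n → ℕ) i + 1) := by
      conv_lhs => rw [← sub_single_add_single β i hβi]
      exact mfact_add_single _ i
    have h4 : (((β - Pi.single i 1 : Fin n → ℕ) i : ℕ) : ℝ) + 1 = (β i : ℝ) := by
      have : (β - Pi.single i 1 : Fin n → ℕ) i + 1 = β i := by
        simp only [Pi.sub_apply, Pi.single_eq_same]
        omega
      exact_mod_cast this
    rw [h3, h4]
    push_cast
    have hne : (mfact (β - Pi.single i 1) : ℝ) ≠ 0 := mfact_ne_zero _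
    have hne2 : (β i : ℝ) ≠ 0 := by exact_mod_cast hβi
    field_simp

lemma key_reindex {n : ℕ} (k : ℕ) (i : Fin n) (g : (Fin n → ℕ) → ℝ) (z : Fin n → ℝ) :
    ∑ β ∈ midx n (k + 1), g β * ((β i : ℝ) * mpow z (β - Pi.single i 1)) / (mfact β : ℝ)
      = ∑ β ∈ midx n k, g (β + Pi.single i 1) * mpow z β / (mfact β : ℝ) := by
  rw [mpow_reindex]
  apply Finset.sum_congr rfl
  intro β _
  rw [mfact_add_single]
  have h1 : (mfact β : ℝ) ≠ 0 := mfact_ne_zero _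
  push_cast
  field_simp

lemma mpow_erase_expand (z : Fin n → ℝ) (β : Fin n → ℕ) (i : Fin n) (h : β i ≠ 0) :
    mpow z (β - Pi.single i 1)
      = z i ^ (β i - 1) * ∏ j ∈ Finset.univ.erase i, z j ^ β j := by
  unfold mpow
  rw [← Finset.prod_erase_mul _ _ (Finset.mem_univ i)]
  have h1 : ∀ j ∈ Finset.univ.erase i, z j ^ ((β - Pi.single i 1 : Fin n → ℕ) j) = z j ^ β j := by
    intro j hj
    have hji : j ≠ i := (Finset.mem_erase.1 hj).1
    simp [Pi.single_apply, hji]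
  rw [Finset.prod_congr rfl h1]
  have h2 : (β - Pi.single i 1 : Fin n → ℕ) i = β i - 1 := by simp
  rw [h2, mul_comm]

lemma hasDerivWithinAt_mpow (γ : ℝ → (Fin n → ℝ)) (v b : Fin n → ℝ) (β : Fin n → ℕ)
    (s : Set ℝ) (t : ℝ) (hγ : HasDerivWithinAt γ v s t) :
    HasDerivWithinAt (fun τ => mpow (γ τ - b) β)
      (∑ i, v i * ((β i : ℝ) * mpow (γ t - b) (β - Pi.single i 1))) s t := by
  have hcoord : ∀ i : Fin n, HasDerivWithinAt (fun τ => γ τ i - b i) (v i) s t := by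
    intro i
    exact (hasDerivWithinAt_pi.1 hγ i).sub_const _
  have hpow : ∀ i : Fin n, HasDerivWithinAt (fun τ => (γ τ i - b i) ^ β i)
      ((β i : ℝ) * (γ t i - b i) ^ (β i - 1) * v i) s t := by
    intro i
    exact (hcoord i).pow (β i)
  have hprod := HasDerivWithinAt.fun_finset_prod (u := Finset.univ)
    (f := fun i τ => (γ τ i - b i) ^ β i)
    (f' := fun i => (β i : ℝ) * (γ t i - b i) ^ (β i - 1) * v i)
    (fun i _ => hpow i)
  have heq : (fun τ => ∏ i, (γ τ i - b i) ^ β i) = fun τ => mpow (γ τ - b) β := by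
    funext τ; unfold mpow; simp
  rw [heq] at hprod
  refine hprod.congr_deriv (Eq.symm ?_)
  apply Finset.sum_congr rfl
  intro i _
  by_cases h : β i = 0
  · simp [h]
  · rw [mpow_erase_expand _ β i h]
    have : ∀ j ∈ Finset.univ.erase i, (γ t - b) j ^ β j = (γ t j - b j) ^ β j := by
      intro j _; simp
    rw [Finset.prod_congr rfl this]
    simp only [smul_eq_mul, Pi.sub_apply]
    ring

lemma hasDerivWithinAt_poly (k : ℕ) (g : (Fin n → ℕ) → ℝ) (b : Fin n → ℝ)
    (γ : ℝ → (Fin n → ℝ)) (v : Fin n → ℝ) (s : Set ℝ) (t : ℝ)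
    (hγ : HasDerivWithinAt γ v s t) :
    HasDerivWithinAt
      (fun τ => ∑ β ∈ midx n (k+1), g β * mpow (γ τ - b) β / (mfact β : ℝ))
      (∑ i, v i * ∑ β ∈ midx n k, g (β + Pi.single i 1) * mpow (γ t - b) β / (mfact β : ℝ))
      s t := by
  have hterm : ∀ β ∈ midx n (k+1), HasDerivWithinAt
      (fun τ => g β * mpow (γ τ - b) β / (mfact β : ℝ))
      ((g β / (mfact β : ℝ)) * ∑ i, v i * ((β i : ℝ) * mpow (γ t - b) (β - Pi.single i 1)))
      s t := by
    intro β _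
    have h1 := (hasDerivWithinAt_mpow γ v b β s t hγ).const_mul (g β / (mfact β : ℝ))
    rw [show (fun τ => g β * mpow (γ τ - b) β / (mfact β : ℝ))
        = fun τ => g β / (mfact β : ℝ) * mpow (γ τ - b) β from funext fun τ => by ring]
    exact h1
  have hsum := HasDerivWithinAt.fun_sum hterm
  refine hsum.congr_deriv (Eq.symm ?_)
  have step1 : ∑ β ∈ midx n (k+1), (g β / (mfact β : ℝ))
      * ∑ i, v i * ((β i : ℝ) * mpow (γ t - b) (β - Pi.single i 1))
    = ∑ β ∈ midx n (k+1), ∑ i, v i *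
        (g β * ((β i : ℝ) * mpow (γ t - b) (β - Pi.single i 1)) / (mfact β : ℝ)) := by
    apply Finset.sum_congr rfl
    intro β _
    rw [Finset.mul_sum]
    apply Finset.sum_congr rfl
    intro i _
    ring
  rw [step1, Finset.sum_comm]
  apply Finset.sum_congr rfl
  intro i _
  rw [← Finset.mul_sum, key_reindex k i g (γ t - b)]

lemma single_injective : Function.Injective (fun i : Fin n => Pi.single i (1:ℕ)) := by
  intro i j hij
  by_contra h
  have := congrFun hij i
  simp only [Pi.single_eq_same, Pi.single_apply, if_neg h] at this
  exact one_ne_zero this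

lemma mdeg_le_one {β : Fin n → ℕ} (h : mdeg β ≤ 1) : β = 0 ∨ ∃ i, β = Pi.single i 1 := by
  rcases Nat.le_one_iff_eq_zero_or_eq_one.1 h with h0 | h1
  · exact Or.inl (mdeg_eq_zero.1 h0)
  · right
    have hex : ∃ i, β i ≠ 0 := by
      by_contra hc
      push_neg at hc
      have : β = 0 := funext fun i => hc i
      rw [this] at h1
      rw [mdeg_eq_zero.2 rfl] at h1
      exact absurd h1 (by norm_num)
    obtain ⟨i, hi⟩ := hex
    refine ⟨i, ?_⟩
    have hsplit : mdeg β = β i + ∑ j ∈ Finset.univ.erase i, β j := by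
      unfold mdeg
      rw [← Finset.add_sum_erase _ _ (Finset.mem_univ i)]
    funext j
    by_cases hj : j = i
    · subst hj
      have : β j = 1 := by omega
      simp [this]
    · have hzero : ∑ l ∈ Finset.univ.erase i, β l = 0 := by omega
      have := Finset.sum_eq_zero_iff.1 hzero j (Finset.mem_erase.2 ⟨hj, Finset.mem_univ j⟩)
      simp [Pi.single_apply, hj, this]

lemma midx_low_filter {k : ℕ} (hk : 1 ≤ k) :
    (midx n k).filter (fun β => ¬ 2 ≤ mdeg β)
      = insert (0 : Fin n → ℕ) (Finset.image (fun i => Pi.single i 1) Finset.univ) := by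
  ext β
  simp only [Finset.mem_filter, Finset.mem_insert, Finset.mem_image, Finset.mem_univ, true_and,
    mem_midx, not_le]
  constructor
  · rintro ⟨_, h2⟩
    rcases mdeg_le_one (show mdeg β ≤ 1 by omega) with h | ⟨i, hi⟩
    · exact Or.inl h
    · exact Or.inr ⟨i, hi.symm⟩
  · rintro (rfl | ⟨i, rfl⟩)
    · constructor
      · rw [mdeg_eq_zero.2 rfl]; omega
      · rw [mdeg_eq_zero.2 rfl]; omega
    · rw [mdeg_single]
      omega

lemma sum_midx_split (k : ℕ) (hk : 1 ≤ k) (g : (Fin n → ℕ) → ℝ) (z : Fin n → ℝ) :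
    ∑ β ∈ midx n k, g β * mpow z β / (mfact β : ℝ)
      = g 0 + (∑ i, g (Pi.single i 1) * z i)
        + ∑ β ∈ (midx n k).filter (fun β => 2 ≤ mdeg β), g β * mpow z β / (mfact β : ℝ) := by
  rw [← Finset.sum_filter_add_sum_filter_not (midx n k) (fun β => 2 ≤ mdeg β)]
  rw [add_comm, midx_low_filter hk]
  congr 1
  rw [Finset.sum_insert, Finset.sum_image]
  · rw [mpow_zero_idx, mfact_zero]
    simp only [Nat.cast_one, mul_one, div_one]
    congr 1
    apply Finset.sum_congr rfl
    intro i _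
    rw [mpow_single, mfact_single]
    simp
  · intro i _ j _ hij
    exact single_injective hij
  · simp only [Finset.mem_image, Finset.mem_univ, true_and, not_exists]
    intro i hi
    have := congrFun hi i
    simp at this

lemma contDiffOn_one_of_deriv {E : Type*} [NormedAddCommGroup E] [NormedSpace ℝ E]
    {φ : E → ℝ} {L : E → E →L[ℝ] ℝ} {s : Set E}
    (hd : ∀ x ∈ s, HasFDerivWithinAt φ (L x) s x) (hc : ContinuousOn L s) :
    ContDiffOn ℝ 1 φ s := by
  classical
  set p : E → FormalMultilinearSeries ℝ E ℝ := fun x k =>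
    match k with
    | 0 => (continuousMultilinearCurryFin0 ℝ E ℝ).symm (φ x)
    | 1 => (continuousMultilinearCurryFin1 ℝ E ℝ).symm (L x)
    | (_ + 2) => 0 with hp
  have hT : HasFTaylorSeriesUpToOn (((0:ℕ) + 1 : ℕ) : WithTop ℕ∞) φ p s := by
    rw [hasFTaylorSeriesUpToOn_succ_nat_iff_right]
    refine ⟨fun x hx => by simp [hp], ?_, ?_⟩
    · intro x hx
      have h1 : (fun y => p y 0)
          = fun y => (continuousMultilinearCurryFin0 ℝ E ℝ).symm (φ y) := rfl
      rw [h1]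
      have h2 : (p x 1).curryLeft
          = ((continuousMultilinearCurryFin0 ℝ E ℝ).symm
              : ℝ →L[ℝ] (E[×0]→L[ℝ] ℝ)).comp (L x) := by
        ext y
        simp [hp]
      rw [h2]
      exact ((continuousMultilinearCurryFin0 ℝ E ℝ).symm.comp_hasFDerivWithinAt_iff).2 (hd x hx)
    · rw [show (((0:ℕ)) : WithTop ℕ∞) = 0 from rfl, hasFTaylorSeriesUpToOn_zero_iff]
      constructor
      · have : (fun x => continuousMultilinearCurryFin1 ℝ E ℝ (p x 1)) = L := by
          funext x; simp [hp]
        rw [this]; exact hc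
      · intro x hx
        ext v
        simp [hp, FormalMultilinearSeries.shift, Fin.snoc]
  have hT' : HasFTaylorSeriesUpToOn ((1:ℕ∞) : WithTop ℕ∞) φ p s := by
    exact_mod_cast hT
  have := hT'.contDiffOn
  simpa using this

lemma image_deriv_mem_tangentCone {d n : ℕ} {param : (Fin d → ℝ) → (Fin n → ℝ)}
    {Λ : Set (Fin n → ℝ)} {B : Set (Fin d → ℝ)} {w : Fin d → ℝ}
    (hB : B ∈ 𝓝 w) (hmap : ∀ x ∈ B, param x ∈ Λ)
    {P : (Fin d → ℝ) →L[ℝ] (Fin n → ℝ)} (hP : HasFDerivAt param P w) (v : Fin d → ℝ) :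
    P v ∈ tangentConeAt ℝ Λ (param w) := by
  have h1 : HasFDerivWithinAt param P B w := hP.hasFDerivWithinAt
  have h2 := h1.mapsTo_tangent_cone (𝕜 := ℝ)
  have h3 : tangentConeAt ℝ B w = Set.univ := by
    rw [← Set.univ_inter B, tangentConeAt_inter_nhds hB, tangentConeAt_univ]
  have h4 : P v ∈ tangentConeAt ℝ (param '' B) (param w) := h2 (by rw [h3]; trivial)
  exact tangentConeAt_mono (Set.image_subset_iff.2 fun x hx => hmap x hx) h4

noncomputable def Lmap (f : (Fin n → ℕ) → (Fin n → ℝ) → ℝ) (α : Fin n → ℕ)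
    (a : Fin n → ℝ) : (Fin n → ℝ) →L[ℝ] ℝ :=
  ∑ i, f (α + Pi.single i 1) a • (ContinuousLinearMap.proj i : ((Fin n → ℝ) →L[ℝ] ℝ))

lemma Lmap_apply (f : (Fin n → ℕ) → (Fin n → ℝ) → ℝ) (α : Fin n → ℕ)
    (a z : Fin n → ℝ) : Lmap f α a z = ∑ i, f (α + Pi.single i 1) a * z i := by
  simp [Lmap, ContinuousLinearMap.sum_apply]

lemma whitney_hasFDerivWithinAt {m : ℕ} {Λ : Set (Fin n → ℝ)}
    {f : (Fin n → ℕ) → (Fin n → ℝ) → ℝ} (hW : IsWhitneyField m Λ f)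
    {α : Fin n → ℕ} (hα : mdeg α + 1 ≤ m) {a : Fin n → ℝ} (ha : a ∈ Λ) :
    HasFDerivWithinAt (f α) (Lmap f α a) Λ a := by
  rw [hasFDerivWithinAt_iff_isLittleO, Asymptotics.isLittleO_iff]
  intro c hc
  set k := m - mdeg α with hk
  have hk1 : 1 ≤ k := by omega
  obtain ⟨δ, hδ, hwh⟩ := hW.2 α (by omega) a ha (c/2) (by linarith)
  set C : ℝ := ∑ β ∈ (midx n k).filter (fun β => 2 ≤ mdeg β), |f (α + β) a| with hC
  have hC0 : 0 ≤ C := Finset.sum_nonneg fun β _ => abs_nonneg _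
  have hη : (0:ℝ) < min δ (min 1 (c / (2 * (C + 1)))) := by
    apply lt_min hδ
    apply lt_min one_pos
    positivity
  filter_upwards [inter_mem_nhdsWithin Λ (Metric.ball_mem_nhds a hη)] with x hx
  obtain ⟨hxΛ, hxball⟩ := hx
  have hxδ : dist x a < δ := lt_of_lt_of_le (Metric.mem_ball.1 hxball) (min_le_left _ _)
  have hx1 : dist x a < 1 :=
    lt_of_lt_of_le (Metric.mem_ball.1 hxball) ((min_le_right _ _).trans (min_le_left _ _))
  have hxc : dist x a < c / (2 * (C + 1)) :=
    lt_of_lt_of_le (Metric.mem_ball.1 hxball) ((min_le_right _ _).trans (min_le_right _ _))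
  have hmain := hwh x hxΛ a ha hxδ (by simpa using hδ)
  rw [sum_midx_split k hk1 (fun β => f (α + β) a) (x - a)] at hmain
  have hg0 : f (α + 0) a = f α a := by rw [add_zero]
  rw [hg0] at hmain
  -- tail bound
  set T : ℝ := ∑ β ∈ (midx n k).filter (fun β => 2 ≤ mdeg β),
      f (α + β) a * mpow (x - a) β / (mfact β : ℝ) with hT
  have hnorm : ‖x - a‖ = dist x a := (dist_eq_norm x a).symm
  have htail : |T| ≤ C * dist x a ^ 2 := by
    rw [hT, hC]
    calc |∑ β ∈ (midx n k).filter (fun β => 2 ≤ mdeg β),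
        f (α + β) a * mpow (x - a) β / (mfact β : ℝ)|
        ≤ ∑ β ∈ (midx n k).filter (fun β => 2 ≤ mdeg β),
          |f (α + β) a * mpow (x - a) β / (mfact β : ℝ)| := Finset.abs_sum_le_sum_abs _ _
      _ ≤ ∑ β ∈ (midx n k).filter (fun β => 2 ≤ mdeg β), |f (α + β) a| * dist x a ^ 2 := by
          apply Finset.sum_le_sum
          intro β hβ
          have h2 : 2 ≤ mdeg β := (Finset.mem_filter.1 hβ).2
          have hf1 : (1:ℝ) ≤ (mfact β : ℝ) := by exact_mod_cast (mfact_pos β)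
          rw [abs_div, abs_mul]
          have : |(mfact β : ℝ)| = (mfact β : ℝ) := abs_of_pos (by linarith)
          rw [this]
          have hb1 : |mpow (x - a) β| ≤ dist x a ^ 2 := by
            calc |mpow (x - a) β| ≤ ‖x - a‖ ^ mdeg β := abs_mpow_le _ _
              _ ≤ ‖x - a‖ ^ 2 := by
                  apply pow_le_pow_of_le_one (norm_nonneg _) _ h2
                  rw [hnorm]; exact le_of_lt hx1
              _ = dist x a ^ 2 := by rw [hnorm]
          calc |f (α + β) a| * |mpow (x - a) β| / (mfact β : ℝ)
              ≤ |f (α + β) a| * |mpow (x - a) β| / 1 := by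
                apply div_le_div_of_nonneg_left _ one_pos hf1 <;> positivity
            _ = |f (α + β) a| * |mpow (x - a) β| := by ring
            _ ≤ |f (α + β) a| * dist x a ^ 2 :=
                mul_le_mul_of_nonneg_left hb1 (abs_nonneg _)
      _ = (∑ β ∈ (midx n k).filter (fun β => 2 ≤ mdeg β), |f (α + β) a|) * dist x a ^ 2 := by
          rw [Finset.sum_mul]
  have hpow : dist x a ^ k ≤ dist x a := by
    calc dist x a ^ k ≤ dist x a ^ 1 :=
      pow_le_pow_of_le_one dist_nonneg (le_of_lt hx1) (by omega)
    _ = dist x a := pow_one _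
  have hLx : Lmap f α a (x - a) = ∑ i, f (α + Pi.single i 1) a * (x - a) i :=
    Lmap_apply f α a (x - a)
  have key : |f α x - f α a - Lmap f α a (x - a)| ≤ (c/2) * dist x a + C * dist x a ^ 2 := by
    have h1 : f α x - f α a - Lmap f α a (x - a)
        = (f α x - (f α a + (∑ i, f (α + Pi.single i 1) a * (x - a) i) + T)) + T := by
      rw [hLx]; ring
    rw [h1]
    calc |(f α x - (f α a + (∑ i, f (α + Pi.single i 1) a * (x - a) i) + T)) + T|
        ≤ |f α x - (f α a + (∑ i, f (α + Pi.single i 1) a * (x - a) i) + T)| + |T| :=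
          abs_add_le _ _
      _ ≤ (c/2) * dist x a ^ k + C * dist x a ^ 2 := by
          apply add_le_add _ htail
          exact hmain
      _ ≤ (c/2) * dist x a + C * dist x a ^ 2 := by
          apply add_le_add_left
          apply mul_le_mul_of_nonneg_left hpow (by linarith)
  have hhalf : (C+1) * (c / (2*(C+1))) = c/2 := by
    field_simp
  have h3 : (C+1) * dist x a ≤ c/2 := by
    calc (C+1) * dist x a ≤ (C+1) * (c / (2*(C+1))) :=
      mul_le_mul_of_nonneg_left (le_of_lt hxc) (by linarith)
    _ = c/2 := hhalf
  have htail2 : C * dist x a ^ 2 ≤ (c/2) * dist x a := by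
    nlinarith [dist_nonneg (x := x) (y := a), hC0]
  calc ‖f α x - f α a - Lmap f α a (x - a)‖ ≤ (c/2) * dist x a + C * dist x a ^ 2 := key
    _ ≤ (c/2) * dist x a + (c/2) * dist x a := add_le_add_right htail2 _
    _ = c * ‖x - a‖ := by rw [hnorm]; ring

lemma forward_dir {m : ℕ} {Λ : Set (Fin n → ℝ)} {f : (Fin n → ℕ) → (Fin n → ℝ) → ℝ}
    (hW : IsWhitneyField m Λ f) :
    (∀ α, mdeg α + 1 ≤ m → ContDiffOn ℝ 1 (f α) Λ) ∧
      ∀ a ∈ Λ, ∀ u ∈ tangentConeAt ℝ Λ a, ∀ α, mdeg α + 1 ≤ m →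
        fderivWithin ℝ (f α) Λ a u = ∑ i, u i * f (α + Pi.single i 1) a := by
  constructor
  · intro α hα
    apply contDiffOn_one_of_deriv (fun x hx => whitney_hasFDerivWithinAt hW hα hx)
    unfold Lmap
    apply continuousOn_finset_sum
    intro i _
    apply ContinuousOn.fun_smul _ continuousOn_const
    apply hW.1
    rw [mdeg_add, mdeg_single]
    exact hα
  · intro a ha u hu α hα
    have h1 := whitney_hasFDerivWithinAt hW hα ha
    have h2 := (h1.differentiableWithinAt).hasFDerivWithinAt
    have h3 := h2.unique_on h1 hu
    rw [h3, Lmap_apply]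
    exact Finset.sum_congr rfl fun i _ => mul_comm _ _

set_option maxHeartbeats 1000000 in
lemma backward_est {m : ℕ} {Λ : Set (Fin n → ℝ)} {f : (Fin n → ℕ) → (Fin n → ℝ) → ℝ}
    (hΛ : IsSubmanifold (m : WithTop ℕ∞) Λ)
    (hcont : ∀ α, mdeg α ≤ m → ContinuousOn (f α) Λ)
    (hdiff : ∀ α, mdeg α + 1 ≤ m → ContDiffOn ℝ 1 (f α) Λ)
    (hder : ∀ a ∈ Λ, ∀ u ∈ tangentConeAt ℝ Λ a, ∀ α, mdeg α + 1 ≤ m →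
        fderivWithin ℝ (f α) Λ a u = ∑ i, u i * f (α + Pi.single i 1) a)
    {c : Fin n → ℝ} (hc : c ∈ Λ) (k : ℕ) :
    ∀ ε > (0:ℝ), ∃ δ > (0:ℝ), ∀ a ∈ Λ, ∀ b ∈ Λ, dist a c < δ → dist b c < δ →
      ∀ α : Fin n → ℕ, mdeg α ≤ m → m - mdeg α ≤ k →
      |f α a - ∑ β ∈ midx n (m - mdeg α), f (α + β) b * mpow (a - b) β / (mfact β : ℝ)|
        ≤ ε * dist a b ^ (m - mdeg α) := by
  induction k with
  | zero =>
    intro ε hε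
    have H : ∀ α : Fin n → ℕ, ∃ δ, 0 < δ ∧
        (mdeg α ≤ m → ∀ x ∈ Λ, dist x c < δ → |f α x - f α c| < ε/2) := by
      intro α
      by_cases hα : mdeg α ≤ m
      · have hcw := hcont α hα c hc
        rw [Metric.continuousWithinAt_iff] at hcw
        obtain ⟨δ, hδ, hδ2⟩ := hcw (ε/2) (by linarith)
        refine ⟨δ, hδ, fun _ x hx hdx => ?_⟩
        rw [← Real.dist_eq]
        exact hδ2 hx hdx
      · exact ⟨1, one_pos, fun h => absurd h hα⟩
    choose δs hδs using H
    refine ⟨(midx n m).inf' ⟨0, zero_mem_midx⟩ δs, ?_, ?_⟩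
    · exact (Finset.lt_inf'_iff _).2 fun α _ => (hδs α).1
    intro a ha b hb hac hbc α hα hk0
    have hmeq : m - mdeg α = 0 := Nat.le_zero.1 hk0
    rw [hmeq]
    have hsum : ∑ β ∈ midx n 0, f (α + β) b * mpow (a-b) β / (mfact β : ℝ) = f α b := by
      have h0 : midx n 0 = {0} := by
        ext β
        simp [mem_midx, Nat.le_zero, mdeg_eq_zero, Finset.mem_singleton]
      rw [h0, Finset.sum_singleton, mpow_zero_idx, mfact_zero, add_zero]
      simp
    rw [hsum, pow_zero, mul_one]
    have hmem : α ∈ midx n m := mem_midx.2 hα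
    have hδa := Finset.inf'_le δs hmem
    have h1 : |f α a - f α c| < ε/2 := (hδs α).2 hα a ha (lt_of_lt_of_le hac hδa)
    have h2 : |f α b - f α c| < ε/2 := (hδs α).2 hα b hb (lt_of_lt_of_le hbc hδa)
    have h3 := abs_sub_le (f α a) (f α c) (f α b)
    rw [abs_sub_comm (f α c) (f α b)] at h3
    linarith
  | succ k IH =>
    intro ε hε
    by_cases hm : 1 ≤ m
    swap
    · obtain ⟨δ, hδ, hIH⟩ := IH ε hε
      exact ⟨δ, hδ, fun a ha b hb hac hbc α hα hk =>
        hIH a ha b hb hac hbc α hα (by omega)⟩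
    obtain ⟨d, U, W, param, chart, hU, hcU, hWopen, hparam, hchart, himg, hli, hri⟩ := hΛ c hc
    obtain ⟨w₀, hw₀W, hw₀⟩ : ∃ w₀ ∈ W, param w₀ = c := by
      have : c ∈ param '' W := by rw [himg]; exact ⟨hc, hcU⟩
      obtain ⟨w₀, hw₀, h⟩ := this
      exact ⟨w₀, hw₀, h⟩
    have hchartc : chart c = w₀ := by rw [← hw₀]; exact hli w₀ hw₀W
    have hm' : (1 : WithTop ℕ∞) ≤ (m : WithTop ℕ∞) := by exact_mod_cast hm
    have hparam1 : ContDiffOn ℝ 1 param W := hparam.of_le hm'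
    have hchart1 : ContDiffOn ℝ 1 chart U := hchart.of_le hm'
    have hchartAt : ContDiffAt ℝ 1 chart c := (hchart1 c hcU).contDiffAt (hU.mem_nhds hcU)
    obtain ⟨Kc, tc, htc, hlipc⟩ := hchartAt.exists_lipschitzOnWith
    set KC : ℝ := (Kc : ℝ) + 1 with hKCdef
    have hKCpos : 0 < KC := by positivity
    have hKcKC : (Kc : ℝ) ≤ KC := by simp [hKCdef]
    obtain ⟨ρ, hρpos, hρW⟩ : ∃ ρ > 0, Metric.closedBall w₀ ρ ⊆ W := by
      obtain ⟨ρ, hρ, h⟩ := Metric.isOpen_iff.1 hWopen w₀ hw₀W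
      exact ⟨ρ/2, by linarith, (Metric.closedBall_subset_ball (by linarith)).trans h⟩
    have hpdiff : ∀ w ∈ W, DifferentiableAt ℝ param w := fun w hw =>
      ((hparam1.differentiableOn one_ne_zero) w hw).differentiableAt (hWopen.mem_nhds hw)
    have hfdcont : ContinuousOn (fderiv ℝ param) W :=
      hparam1.continuousOn_fderiv_of_isOpen hWopen le_rfl
    obtain ⟨Cp0, hCp0⟩ := (isCompact_closedBall w₀ ρ).exists_bound_of_continuousOn
      (hfdcont.mono hρW)
    set CP : ℝ := max Cp0 1 with hCPdef
    have hCP1 : (1:ℝ) ≤ CP := le_max_right _ _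
    have hCPpos : (0:ℝ) < CP := lt_of_lt_of_le one_pos hCP1
    have hCPb : ∀ w ∈ Metric.closedBall w₀ ρ, ‖fderiv ℝ param w‖ ≤ CP :=
      fun w hw => (hCp0 w hw).trans (le_max_left _ _)
    have hplip : ∀ x ∈ Metric.closedBall w₀ ρ, ∀ y ∈ Metric.closedBall w₀ ρ,
        ‖param y - param x‖ ≤ CP * ‖y - x‖ := by
      intro x hx y hy
      exact (convex_closedBall _ _).norm_image_sub_le_of_norm_hasFDerivWithin_le
        (fun z hz => ((hpdiff z (hρW hz)).hasFDerivAt).hasFDerivWithinAt)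
        (fun z hz => hCPb z hz) hx hy
    set C1 : ℝ := CP * KC with hC1def
    have hC1pos : 0 < C1 := mul_pos hCPpos hKCpos
    set X : ℝ := (n : ℝ) * C1 ^ (k+1) with hXdef
    have hX0 : 0 ≤ X := by positivity
    set ε₀ : ℝ := ε / (X + 1) with hε₀def
    have hε₀pos : 0 < ε₀ := by positivity
    have hε₀ε : ε₀ ≤ ε := by
      rw [hε₀def, div_le_iff₀ (by linarith)]
      nlinarith
    obtain ⟨δk, hδkpos, hIH⟩ := IH ε₀ hε₀pos
    obtain ⟨r₁, hr₁, hball⟩ : ∃ r₁ > 0, Metric.ball c r₁ ⊆ tc ∩ U := by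
      have : tc ∩ U ∈ 𝓝 c := inter_mem htc (hU.mem_nhds hcU)
      obtain ⟨r₁, hr₁, h⟩ := Metric.mem_nhds_iff.1 this
      exact ⟨r₁, hr₁, h⟩
    have hctc : c ∈ tc := mem_of_mem_nhds htc
    set δc : ℝ := min (min r₁ (ρ / (2 * KC))) (min (δk / (C1 + 1)) δk) with hδcdef
    have hδcpos : 0 < δc := by
      apply lt_min (lt_min hr₁ (by positivity)) (lt_min (by positivity) hδkpos)
    refine ⟨δc, hδcpos, ?_⟩
    intro a ha b hb hac hbc α hα hk1
    by_cases hcase : m - mdeg α ≤ k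
    · have h1 := hIH a ha b hb
        (lt_of_lt_of_le hac (le_trans (min_le_right _ _) (min_le_right _ _)))
        (lt_of_lt_of_le hbc (le_trans (min_le_right _ _) (min_le_right _ _)))
        α hα hcase
      exact h1.trans (mul_le_mul_of_nonneg_right hε₀ε (pow_nonneg dist_nonneg _))
    -- main case
    have hkeq : m - mdeg α = k + 1 := by omega
    have hα1 : mdeg α + 1 ≤ m := by omega
    have hδr₁ : δc ≤ r₁ := le_trans (min_le_left _ _) (min_le_left _ _)
    have hδρ : δc ≤ ρ / (2 * KC) := le_trans (min_le_left _ _) (min_le_right _ _)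
    have hδδk1 : δc ≤ δk / (C1 + 1) := le_trans (min_le_right _ _) (min_le_left _ _)
    have hδδk : δc ≤ δk := le_trans (min_le_right _ _) (min_le_right _ _)
    have hatcU : a ∈ tc ∩ U := hball (by rw [Metric.mem_ball]; exact lt_of_lt_of_le hac hδr₁)
    have hbtcU : b ∈ tc ∩ U := hball (by rw [Metric.mem_ball]; exact lt_of_lt_of_le hbc hδr₁)
    set wa := chart a with hwadef
    set wb := chart b with hwbdef
    set v : Fin d → ℝ := wa - wb with hvdef
    have hwaw₀ : ‖wa - w₀‖ ≤ KC * δc := by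
      rw [← hchartc, ← dist_eq_norm]
      calc dist (chart a) (chart c) ≤ (Kc : ℝ) * dist a c := hlipc.dist_le_mul a hatcU.1 c hctc
        _ ≤ KC * δc := by
            apply mul_le_mul hKcKC (le_of_lt hac) dist_nonneg (le_of_lt hKCpos)
    have hwbw₀ : ‖wb - w₀‖ ≤ KC * δc := by
      rw [← hchartc, ← dist_eq_norm]
      calc dist (chart b) (chart c) ≤ (Kc : ℝ) * dist b c := hlipc.dist_le_mul b hbtcU.1 c hctc
        _ ≤ KC * δc := by
            apply mul_le_mul hKcKC (le_of_lt hbc) dist_nonneg (le_of_lt hKCpos)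
    have hKCδρ : KC * δc ≤ ρ / 2 := by
      calc KC * δc ≤ KC * (ρ / (2 * KC)) :=
        mul_le_mul_of_nonneg_left hδρ (le_of_lt hKCpos)
      _ = ρ / 2 := by field_simp
    have hvnorm : ‖v‖ ≤ KC * dist a b := by
      rw [hvdef, ← dist_eq_norm]
      calc dist wa wb ≤ (Kc : ℝ) * dist a b := hlipc.dist_le_mul a hatcU.1 b hbtcU.1
        _ ≤ KC * dist a b := mul_le_mul_of_nonneg_right hKcKC dist_nonneg
    set σ : ℝ → (Fin d → ℝ) := fun t => wb + t • v with hσdef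
    have hσw₀ : ∀ t ∈ Icc (0:ℝ) 1, ‖σ t - w₀‖ ≤ KC * δc := by
      intro t ht
      obtain ⟨ht0, ht1⟩ := ht
      have hrepr : σ t - w₀ = (1-t) • (wb - w₀) + t • (wa - w₀) := by
        rw [hσdef]
        simp only [hvdef]
        module
      rw [hrepr]
      calc ‖(1-t) • (wb - w₀) + t • (wa - w₀)‖
          ≤ ‖(1-t) • (wb - w₀)‖ + ‖t • (wa - w₀)‖ := norm_add_le _ _
        _ = (1-t) * ‖wb - w₀‖ + t * ‖wa - w₀‖ := by
            rw [norm_smul, norm_smul, Real.norm_of_nonneg (by linarith),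
              Real.norm_of_nonneg ht0]
        _ ≤ (1-t) * (KC * δc) + t * (KC * δc) := by
            apply add_le_add
            · exact mul_le_mul_of_nonneg_left hwbw₀ (by linarith)
            · exact mul_le_mul_of_nonneg_left hwaw₀ ht0
        _ = KC * δc := by ring
    have hσball : ∀ t ∈ Icc (0:ℝ) 1, σ t ∈ Metric.closedBall w₀ ρ := by
      intro t ht
      rw [Metric.mem_closedBall, dist_eq_norm]
      exact (hσw₀ t ht).trans (hKCδρ.trans (by linarith))
    have hσW : ∀ t ∈ Icc (0:ℝ) 1, σ t ∈ W := fun t ht => hρW (hσball t ht)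
    set γ : ℝ → (Fin n → ℝ) := fun t => param (σ t) with hγdef
    have hγΛU : ∀ t ∈ Icc (0:ℝ) 1, γ t ∈ Λ ∩ U := by
      intro t ht
      rw [← himg]
      exact mem_image_of_mem param (hσW t ht)
    have hσ0 : σ 0 = wb := by simp [hσdef]
    have hσ1 : σ 1 = wa := by
      rw [hσdef]
      simp only [one_smul, hvdef]
      abel
    have hγapp : ∀ t, γ t = param (σ t) := fun t => rfl
    have hγ0 : γ 0 = b := by
      rw [hγdef]; simp only [hσ0, hwbdef]
      exact hri b ⟨hb, hbtcU.2⟩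
    have hγ1 : γ 1 = a := by
      rw [hγdef]; simp only [hσ1, hwadef]
      exact hri a ⟨ha, hatcU.2⟩
    have hwbball : wb ∈ Metric.closedBall w₀ ρ := by
      rw [Metric.mem_closedBall, dist_eq_norm]
      exact hwbw₀.trans (hKCδρ.trans (by linarith))
    have hγb : ∀ t ∈ Icc (0:ℝ) 1, ‖γ t - b‖ ≤ C1 * dist a b := by
      intro t ht
      obtain ⟨ht0, ht1⟩ := ht
      have hpwb : param wb = b := by rw [← hσ0, ← hγapp 0]; exact hγ0
      have h1 : γ t - b = param (σ t) - param wb := by rw [hpwb, hγapp]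
      rw [h1]
      calc ‖param (σ t) - param wb‖ ≤ CP * ‖σ t - wb‖ :=
        hplip wb hwbball (σ t) (hσball t ⟨ht0, ht1⟩)
      _ = CP * (t * ‖v‖) := by
          rw [hσdef]
          simp only [add_sub_cancel_left, norm_smul, Real.norm_of_nonneg ht0]
      _ ≤ CP * ‖v‖ := by
          apply mul_le_mul_of_nonneg_left _ (le_of_lt hCPpos)
          nlinarith [norm_nonneg v]
      _ ≤ CP * (KC * dist a b) := mul_le_mul_of_nonneg_left hvnorm (le_of_lt hCPpos)
      _ = C1 * dist a b := by rw [hC1def]; ring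
    have hγc : ∀ t ∈ Icc (0:ℝ) 1, dist (γ t) c < δk := by
      intro t ht
      have h1 : γ t - c = param (σ t) - param w₀ := by rw [hw₀, hγapp]
      rw [dist_eq_norm, h1]
      calc ‖param (σ t) - param w₀‖ ≤ CP * ‖σ t - w₀‖ :=
        hplip w₀ (Metric.mem_closedBall_self (le_of_lt hρpos)) (σ t) (hσball t ht)
      _ ≤ CP * (KC * δc) := mul_le_mul_of_nonneg_left (hσw₀ t ht) (le_of_lt hCPpos)
      _ = C1 * δc := by rw [hC1def]; ring
      _ ≤ C1 * (δk / (C1 + 1)) := mul_le_mul_of_nonneg_left hδδk1 (le_of_lt hC1pos)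
      _ < δk := by
          rw [div_eq_mul_inv]
          rw [← mul_assoc]
          have h2 : C1 * δk * (C1 + 1)⁻¹ < δk ↔ C1 * δk < δk * (C1 + 1) := by
            rw [mul_inv_lt_iff₀ (by linarith)]
          rw [h2]
          nlinarith
    have hσderiv : ∀ t ∈ Icc (0:ℝ) 1, HasDerivWithinAt σ v (Icc (0:ℝ) 1) t := by
      intro t _
      have h1 : HasDerivAt (fun τ : ℝ => wb + τ • v) v t := by
        simpa using ((hasDerivAt_id t).smul_const v).const_add wb
      exact h1.hasDerivWithinAt
    set P : ℝ → ((Fin d → ℝ) →L[ℝ] (Fin n → ℝ)) := fun t => fderiv ℝ param (σ t) with hPdef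
    have hγderiv : ∀ t ∈ Icc (0:ℝ) 1, HasDerivWithinAt γ (P t v) (Icc (0:ℝ) 1) t := by
      intro t ht
      have h1 := ((hpdiff (σ t) (hσW t ht)).hasFDerivAt).comp_hasDerivWithinAt t (hσderiv t ht)
      exact h1
    have hPvb : ∀ t ∈ Icc (0:ℝ) 1, ‖P t v‖ ≤ C1 * dist a b := by
      intro t ht
      calc ‖P t v‖ ≤ ‖P t‖ * ‖v‖ := (P t).le_opNorm v
        _ ≤ CP * (KC * dist a b) := by
            apply mul_le_mul (hCPb (σ t) (hσball t ht)) hvnorm (norm_nonneg v)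
              (le_of_lt hCPpos)
        _ = C1 * dist a b := by rw [hC1def]; ring
    -- tangent cone values
    have htang : ∀ t ∈ Icc (0:ℝ) 1, P t v ∈ tangentConeAt ℝ Λ (γ t) := by
      intro t ht
      have hmap : ∀ x ∈ W, param x ∈ Λ := by
        intro x hx
        have : param x ∈ param '' W := mem_image_of_mem param hx
        rw [himg] at this
        exact this.1
      exact image_deriv_mem_tangentCone (hWopen.mem_nhds (hσW t ht)) hmap
        ((hpdiff (σ t) (hσW t ht)).hasFDerivAt) v
    -- the function g and its derivative
    set g : ℝ → ℝ := fun t =>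
      f α (γ t) - ∑ β ∈ midx n (k+1), f (α + β) b * mpow (γ t - b) β / (mfact β : ℝ)
      with hgdef
    set D : ℝ → ℝ := fun t => ∑ i, P t v i *
      (f (α + Pi.single i 1) (γ t)
        - ∑ β ∈ midx n k, f ((α + Pi.single i 1) + β) b * mpow (γ t - b) β / (mfact β : ℝ))
      with hDdef
    have hgderiv : ∀ t ∈ Icc (0:ℝ) 1, HasDerivWithinAt g (D t) (Icc (0:ℝ) 1) t := by
      intro t ht
      have hdw : DifferentiableWithinAt ℝ (f α) Λ (γ t) :=
        (hdiff α hα1).differentiableOn one_ne_zero (γ t) (hγΛU t ht).1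
      have h1 : HasDerivWithinAt (fun τ => f α (γ τ))
          (fderivWithin ℝ (f α) Λ (γ t) (P t v)) (Icc (0:ℝ) 1) t := by
        have := hdw.hasFDerivWithinAt.comp_hasDerivWithinAt t (hγderiv t ht)
          (fun τ hτ => (hγΛU τ hτ).1)
        exact this
      have h1' : HasDerivWithinAt (fun τ => f α (γ τ))
          (∑ i, P t v i * f (α + Pi.single i 1) (γ t)) (Icc (0:ℝ) 1) t := by
        rw [← hder (γ t) (hγΛU t ht).1 (P t v) (htang t ht) α hα1]
        exact h1
      have h2 := hasDerivWithinAt_poly k (fun β => f (α + β) b) b γ (P t v) (Icc (0:ℝ) 1)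
        t (hγderiv t ht)
      have h2' : HasDerivWithinAt
          (fun τ => ∑ β ∈ midx n (k+1), f (α + β) b * mpow (γ τ - b) β / (mfact β : ℝ))
          (∑ i, P t v i * ∑ β ∈ midx n k,
            f ((α + Pi.single i 1) + β) b * mpow (γ t - b) β / (mfact β : ℝ))
          (Icc (0:ℝ) 1) t := by
        convert h2 using 1
        apply Finset.sum_congr rfl
        intro i _
        congr 1
        apply Finset.sum_congr rfl
        intro β _
        show f ((α + Pi.single i 1) + β) b * mpow (γ t - b) β / (mfact β : ℝ)
          = f (α + (β + Pi.single i 1)) b * mpow (γ t - b) β / (mfact β : ℝ)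
        rw [← add_assoc, add_right_comm]
      have h3 := h1'.sub h2'
      refine h3.congr_deriv (Eq.symm ?_)
      rw [hDdef, ← Finset.sum_sub_distrib]
      apply Finset.sum_congr rfl
      intro i _
      ring
    -- bound on D
    have hDbound : ∀ t ∈ Icc (0:ℝ) 1, ‖D t‖ ≤ ε * dist a b ^ (k+1) := by
      intro t ht
      have hme : ∀ i : Fin n, m - mdeg (α + Pi.single i 1) = k := by
        intro i
        rw [mdeg_add, mdeg_single]
        omega
      have hterm : ∀ i : Fin n,
          |f (α + Pi.single i 1) (γ t)
            - ∑ β ∈ midx n k, f ((α + Pi.single i 1) + β) b * mpow (γ t - b) β / (mfact β : ℝ)|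
          ≤ ε₀ * (C1 * dist a b) ^ k := by
        intro i
        have hmd : mdeg (α + Pi.single i 1) ≤ m := by rw [mdeg_add, mdeg_single]; omega
        have := hIH (γ t) (hγΛU t ht).1 b hb (hγc t ht)
          (lt_of_lt_of_le hbc hδδk) (α + Pi.single i 1) hmd (by rw [hme i])
        rw [hme i] at this
        apply this.trans
        apply mul_le_mul_of_nonneg_left _ (le_of_lt hε₀pos)
        apply pow_le_pow_left₀ dist_nonneg
        rw [dist_eq_norm]
        exact hγb t ht
      rw [Real.norm_eq_abs, hDdef]
      calc |∑ i, P t v i *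
          (f (α + Pi.single i 1) (γ t)
            - ∑ β ∈ midx n k, f ((α + Pi.single i 1) + β) b * mpow (γ t - b) β / (mfact β : ℝ))|
          ≤ ∑ i, |P t v i *
            (f (α + Pi.single i 1) (γ t)
              - ∑ β ∈ midx n k, f ((α + Pi.single i 1) + β) b * mpow (γ t - b) β
                / (mfact β : ℝ))| := Finset.abs_sum_le_sum_abs _ _
        _ ≤ ∑ _i : Fin n, (C1 * dist a b) * (ε₀ * (C1 * dist a b) ^ k) := by
            apply Finset.sum_le_sum
            intro i _
            rw [abs_mul]
            apply mul_le_mul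
            · have hPvi : |P t v i| ≤ ‖P t v‖ := by
                rw [← Real.norm_eq_abs]
                exact norm_le_pi_norm (P t v) i
              exact hPvi.trans (hPvb t ht)
            · exact hterm i
            · exact abs_nonneg _
            · positivity
        _ = (n : ℝ) * ((C1 * dist a b) * (ε₀ * (C1 * dist a b) ^ k)) := by
            rw [Finset.sum_const, Finset.card_univ, Fintype.card_fin, nsmul_eq_mul]
        _ = (X * ε₀) * dist a b ^ (k+1) := by
            rw [hXdef]
            rw [mul_pow]
            ring
        _ ≤ ε * dist a b ^ (k+1) := by
            apply mul_le_mul_of_nonneg_right _ (pow_nonneg dist_nonneg _)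
            rw [hε₀def]
            calc X * (ε / (X + 1)) = ε * (X / (X+1)) := by ring
              _ ≤ ε * 1 := by
                  apply mul_le_mul_of_nonneg_left _ (le_of_lt hε)
                  rw [div_le_one (by linarith)]
                  linarith
              _ = ε := mul_one ε
    -- MVT
    have hMVT := norm_image_sub_le_of_norm_deriv_le_segment_01' hgderiv
      (fun t ht => hDbound t (Ico_subset_Icc_self ht))
    have hg0 : g 0 = 0 := by
      rw [hgdef]
      simp only [hγ0, sub_self]
      rw [sum_midx_self (fun β => f (α + β) b)]
      rw [add_zero]
      ring
    have hg1 : g 1 = f α a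
        - ∑ β ∈ midx n (k+1), f (α + β) b * mpow (a - b) β / (mfact β : ℝ) := by
      rw [hgdef]
      simp only [hγ1]
    rw [hkeq]
    rw [← hg1]
    have : |g 1| = ‖g 1 - g 0‖ := by rw [hg0, sub_zero, Real.norm_eq_abs]
    rw [this]
    exact hMVT

end Aux

/-- **Borel's lemma with parameter.** Let `Λ` be a `C^m` submanifold of `ℝⁿ`
and let `F(a,x) = Σ_{|α|≤m} f_α(a)x^α/α!` have continuous coefficients on `Λ`. Then `F` is a
`C^m` Whitney field on `Λ` if and only if the coefficients of the truncation `F^{m−1}` are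
`C¹` on `Λ` and, for all `a ∈ Λ` and `u ∈ T_aΛ`, `D_{a,u}F^{m−1}(a,x) = D_{x,u}F(a,x)`
(equivalently, coefficientwise: the directional derivative of `f_α` along `Λ` at `a` in the
direction `u` equals `Σ_i u_i f_{α+e_i}(a)` for all `|α| ≤ m−1`). -/

theorem stmt10 {n : ℕ} (m : ℕ) (Λ : Set (Fin n → ℝ))
    (hΛ : IsSubmanifold (m : WithTop ℕ∞) Λ)
    (f : (Fin n → ℕ) → (Fin n → ℝ) → ℝ)
    (hcont : ∀ α, mdeg α ≤ m → ContinuousOn (f α) Λ) :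
    IsWhitneyField m Λ f ↔
      ((∀ α, mdeg α + 1 ≤ m → ContDiffOn ℝ 1 (f α) Λ) ∧
        ∀ a ∈ Λ, ∀ u ∈ tangentConeAt ℝ Λ a, ∀ α, mdeg α + 1 ≤ m →
          fderivWithin ℝ (f α) Λ a u = ∑ i, u i * f (α + Pi.single i 1) a) := by
  constructor
  · intro hW
    exact forward_dir hW
  · rintro ⟨hdiff, hder⟩
    refine ⟨hcont, ?_⟩
    intro α hα c hc ε hε
    obtain ⟨δ, hδ, h⟩ := backward_est hΛ hcont hdiff hder hc m ε hε
    exact ⟨δ, hδ, fun a ha b hb hac hbc =>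
      h a ha b hb hac hbc α hα (Nat.sub_le m (mdeg α))⟩
end
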